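/- arXiv:1206.1250 — 7 statements merged into one kernel-verified Lean document; each statement's English description precedes it below -/
import Mathlib

section
/- Let O be a discrete valuation ring with uniformizer ϖ, let s ≥ 1 be an integer, let R = O/ϖ^s O, and let Γ be a finite group. If V is a finitely generated R[Γ]-module which has finite injective dimension as an R[Γ]-module (i.e. V admits a finite exact resolution 0 → V → I_0 → I_1 → ... → I_n → 0 with each I_j an injective R[Γ]-module), then V is an injective R[Γ]-module. -/
open Function
open scoped DirectSum

set_option maxHeartbeats 1000000

noncomputable section AuxStmt0

universe u₁ u₃ w uI

variable {O : Type u₁} [CommRing O] [IsDomain O] [IsDiscreteValuationRing O]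
variable {Γ : Type u₃} [Group Γ] [Finite Γ]
variable (ϖ : O) (s : ℕ)

local notation "R'" => O ⧸ Ideal.span {ϖ ^ s}
local notation "AG" => MonoidAlgebra (O ⧸ Ideal.span {ϖ ^ s}) Γ

set_option linter.unusedSectionVars false

lemma aux_small_quot (hk : Small.{uI} (O ⧸ Ideal.span {ϖ})) :
    ∀ i : ℕ, Small.{uI} (O ⧸ Ideal.span {ϖ ^ (i + 1)}) := by
  intro i
  induction i with
  | zero => simpa using hk
  | succ i ih =>
    -- surjection from (O ⧸ span ϖ^(i+1)) × (O ⧸ span ϖ)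
    haveI := ih
    haveI := hk
    set I₁ : Ideal O := Ideal.span {ϖ ^ (i + 1)}
    set I₂ : Ideal O := Ideal.span {ϖ ^ (i + 2)}
    set Iϖ : Ideal O := Ideal.span {ϖ}
    let σ₁ : O ⧸ I₁ → O := surjInv Ideal.Quotient.mk_surjective
    let σ₂ : O ⧸ Iϖ → O := surjInv Ideal.Quotient.mk_surjective
    have hσ₁ : ∀ a, Ideal.Quotient.mk I₁ (σ₁ a) = a := fun a =>
      surjInv_eq Ideal.Quotient.mk_surjective a
    have hσ₂ : ∀ a, Ideal.Quotient.mk Iϖ (σ₂ a) = a := fun a =>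
      surjInv_eq Ideal.Quotient.mk_surjective a
    refine small_of_surjective (f := fun p : (O ⧸ I₁) × (O ⧸ Iϖ) =>
      Ideal.Quotient.mk I₂ (σ₁ p.1 + σ₂ p.2 * ϖ ^ (i + 1))) ?_
    intro y
    obtain ⟨x, rfl⟩ := Ideal.Quotient.mk_surjective y
    have h1 : x - σ₁ (Ideal.Quotient.mk I₁ x) ∈ I₁ := by
      rw [← Ideal.Quotient.eq]
      exact (hσ₁ _).symm
    obtain ⟨z, hz⟩ := Ideal.mem_span_singleton'.mp h1
    refine ⟨(Ideal.Quotient.mk I₁ x, Ideal.Quotient.mk Iϖ z), ?_⟩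
    rw [Ideal.Quotient.eq]
    have h2 : σ₂ (Ideal.Quotient.mk Iϖ z) - z ∈ Iϖ := by
      rw [← Ideal.Quotient.eq]
      exact hσ₂ _
    obtain ⟨c, hc⟩ := Ideal.mem_span_singleton'.mp h2
    have : σ₁ (Ideal.Quotient.mk I₁ x) + σ₂ (Ideal.Quotient.mk Iϖ z) * ϖ ^ (i + 1) - x
        = (σ₂ (Ideal.Quotient.mk Iϖ z) - z) * ϖ ^ (i + 1) := by
      rw [sub_mul, hz]; ring
    rw [this, ← hc]
    refine Ideal.mem_span_singleton'.mpr ⟨c, by ring⟩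

lemma aux_small_A (s : ℕ) (hs : 1 ≤ s) (hk : Small.{uI} (O ⧸ Ideal.span {ϖ})) :
    Small.{uI} (MonoidAlgebra (O ⧸ Ideal.span {ϖ ^ s}) Γ) := by
  obtain ⟨s', rfl⟩ : ∃ s', s = s' + 1 := ⟨s - 1, by omega⟩
  haveI : Small.{uI} (O ⧸ Ideal.span {ϖ ^ (s' + 1)}) := aux_small_quot ϖ hk s'
  haveI : Small.{uI} Γ := by
    obtain ⟨m, ⟨e⟩⟩ := Finite.exists_equiv_fin Γ
    exact ⟨⟨ULift.{uI} (Fin m), ⟨e.trans Equiv.ulift.symm⟩⟩⟩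
  refine small_of_injective (β := Γ → (O ⧸ Ideal.span {ϖ ^ (s' + 1)}))
    (f := fun x γ => x.coeff γ) ?_
  intro a b hab
  exact MonoidAlgebra.ext (Finsupp.ext (fun γ => congrFun hab γ))

lemma aux_small_k (hϖ : Irreducible ϖ) {W : Type w} [AddCommGroup W] [Module AG W]
    (v : W) (hv : v ≠ 0) : Small.{w} (O ⧸ Ideal.span {ϖ}) := by
  classical
  set P : ℕ → Prop := fun t => algebraMap O AG (ϖ ^ t) • v = 0 with hP
  have haMs : algebraMap O AG (ϖ ^ s) = 0 := by
    have towORA : IsScalarTower O (O ⧸ Ideal.span {ϖ ^ s}) AG :=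
      IsScalarTower.of_algebraMap_eq (fun c => rfl)
    rw [IsScalarTower.algebraMap_apply O (O ⧸ Ideal.span {ϖ ^ s}) AG]
    have : (algebraMap O (O ⧸ Ideal.span {ϖ ^ s})) (ϖ ^ s) = 0 := by
      rw [Ideal.Quotient.algebraMap_eq, Ideal.Quotient.eq_zero_iff_mem]
      exact Ideal.mem_span_singleton_self _
    rw [this, map_zero]
  have hex : ∃ t, P t := ⟨s, by rw [hP]; simp only [haMs, zero_smul]⟩
  set t₀ := Nat.find hex with ht₀def
  have ht₀ : P t₀ := Nat.find_spec hex
  have ht₀pos : t₀ ≠ 0 := by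
    intro h0
    have := ht₀
    rw [h0, hP] at this
    simp only [pow_zero, map_one, one_smul] at this
    exact hv this
  set wel : W := algebraMap O AG (ϖ ^ (t₀ - 1)) • v with hwel
  have hw : wel ≠ 0 := Nat.find_min hex (m := t₀ - 1) (by omega)
  have hϖw : algebraMap O AG ϖ • wel = 0 := by
    rw [hwel, ← mul_smul, ← map_mul]
    have : ϖ * ϖ ^ (t₀ - 1) = ϖ ^ t₀ := by
      rw [← pow_succ']
      congr 1
      omega
    rw [this]
    exact ht₀
  set σ : (O ⧸ Ideal.span {ϖ}) → O := surjInv Ideal.Quotient.mk_surjective with hσ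
  have hσ1 : ∀ c, Ideal.Quotient.mk (Ideal.span {ϖ}) (σ c) = c := fun c =>
    surjInv_eq Ideal.Quotient.mk_surjective c
  refine small_of_injective (f := fun c : O ⧸ Ideal.span {ϖ} => algebraMap O AG (σ c) • wel) ?_
  intro c c' hcc
  have hcc' : algebraMap O AG (σ c) • wel = algebraMap O AG (σ c') • wel := hcc
  have hz : algebraMap O AG (σ c - σ c') • wel = 0 := by
    rw [map_sub, sub_smul, hcc', sub_self]
  by_cases hmem : σ c - σ c' ∈ Ideal.span {ϖ}
  · have : Ideal.Quotient.mk (Ideal.span {ϖ}) (σ c) = Ideal.Quotient.mk _ (σ c') :=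
      Ideal.Quotient.eq.mpr hmem
    rw [hσ1, hσ1] at this
    exact this
  · exfalso
    have hu : IsUnit (σ c - σ c') := by
      by_contra hnu
      exact hmem (hϖ.maximalIdeal_eq ▸ IsLocalRing.mem_maximalIdeal _ |>.mpr hnu)
    obtain ⟨uu, huu⟩ := hu.map (algebraMap O AG)
    rw [← huu] at hz
    have : wel = 0 := by
      have h2 := congrArg (fun z => ((uu⁻¹ : AGˣ) : AG) • z) hz
      simpa [← mul_smul] using h2
    exact hw this

lemma aux_phi_to_A {M : Type w} [AddCommGroup M] [Module AG M]
    (φ : M → R') (hadd : ∀ x y, φ (x + y) = φ x + φ y)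
    (hsmul : ∀ (r : R') (x : M), φ ((algebraMap R' AG r) • x) = r * φ x) :
    ∃ Φ : M →ₗ[AG] AG, ∀ x, (Φ x).coeff (1 : Γ) = φ x := by
  haveI : Fintype Γ := Fintype.ofFinite Γ
  set T : M → AG := fun x =>
    ∑ γ : Γ, MonoidAlgebra.single γ (φ ((MonoidAlgebra.of R' Γ γ⁻¹) • x)) with hT
  have halgmap : ∀ r : R', algebraMap R' AG r = MonoidAlgebra.single (1 : Γ) r := by
    intro r
    rw [MonoidAlgebra.coe_algebraMap]
    simp
  have hTadd : ∀ x y, T (x + y) = T x + T y := by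
    intro x y
    simp only [hT]
    rw [← Finset.sum_add_distrib]
    refine Finset.sum_congr rfl fun γ _ => ?_
    rw [smul_add, hadd, MonoidAlgebra.single_add]
  have hT0 : T 0 = 0 := by
    have h := hTadd 0 0
    rw [add_zero] at h
    exact (left_eq_add.mp h)
  have hTr : ∀ (r : R') (x : M), T ((algebraMap R' AG r) • x) = algebraMap R' AG r * T x := by
    intro r x
    simp only [hT]
    rw [Finset.mul_sum]
    refine Finset.sum_congr rfl fun γ _ => ?_
    have h1 : (MonoidAlgebra.of R' Γ γ⁻¹) • ((algebraMap R' AG r) • x)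
        = (algebraMap R' AG r) • ((MonoidAlgebra.of R' Γ γ⁻¹) • x) := by
      rw [← mul_smul, ← mul_smul, Algebra.commutes]
    rw [h1, hsmul, halgmap, MonoidAlgebra.single_mul_single, one_mul]
  have hTg : ∀ (g : Γ) (x : M),
      T ((MonoidAlgebra.of R' Γ g) • x) = MonoidAlgebra.of R' Γ g * T x := by
    intro g x
    simp only [hT]
    rw [Finset.mul_sum]
    refine Fintype.sum_equiv (Equiv.mulLeft g⁻¹) _ _ fun γ => ?_
    simp only [Equiv.coe_mulLeft]
    have h2 : ∀ c : R', MonoidAlgebra.of R' Γ g * MonoidAlgebra.single (g⁻¹ * γ) c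
        = MonoidAlgebra.single γ c := by
      intro c
      rw [MonoidAlgebra.of_apply, MonoidAlgebra.single_mul_single, one_mul,
        mul_inv_cancel_left]
    rw [h2]
    have h1 : (MonoidAlgebra.of R' Γ γ⁻¹) • (MonoidAlgebra.of R' Γ g) • x
        = (MonoidAlgebra.of R' Γ (g⁻¹ * γ)⁻¹) • x := by
      rw [← mul_smul, ← map_mul]
      congr 2
      group
    rw [h1]
  have hTsmul : ∀ (a : AG) (x : M), T (a • x) = a * T x := by
    intro a x
    induction a using MonoidAlgebra.induction_linear with
    | zero =>
      rw [zero_smul, hT0, zero_mul]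
    | add f g hf hg =>
      rw [add_smul, hTadd, hf, hg, add_mul]
    | single γ r =>
      show T ((MonoidAlgebra.single γ r : AG) • x) = (MonoidAlgebra.single γ r : AG) * T x
      have hsplit : (MonoidAlgebra.single γ r : AG)
          = algebraMap R' AG r * MonoidAlgebra.of R' Γ γ := by
        rw [halgmap, MonoidAlgebra.of_apply, MonoidAlgebra.single_mul_single, one_mul, mul_one]
      rw [hsplit, mul_smul, hTr, hTg, mul_assoc]
  refine ⟨⟨⟨T, fun x y => hTadd x y⟩, fun a x => by
    simpa using hTsmul a x⟩, ?_⟩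
  intro x
  show ((∑ γ : Γ, MonoidAlgebra.single γ (φ ((MonoidAlgebra.of R' Γ γ⁻¹) • x))) : AG).coeff 1 = φ x
  rw [MonoidAlgebra.coeff_sum, Finsupp.finset_sum_apply]
  rw [Finset.sum_eq_single (1 : Γ)]
  · have h1 : (MonoidAlgebra.of R' Γ (1 : Γ)⁻¹) • x = x := by
      rw [inv_one, map_one, one_smul]
    rw [h1]
    exact Finsupp.single_eq_same
  · intro b _ hb
    exact Finsupp.single_eq_of_ne' hb
  · intro h
    exact absurd (Finset.mem_univ 1) h

lemma aux_embed_free (hϖ : Irreducible ϖ) {M : Type (max u₁ u₃)} [AddCommGroup M] [Module AG M]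
    [Module.Finite AG M] :
    ∃ (m : ℕ) (φ : M →ₗ[AG] (Fin m → AG)), Function.Injective φ := by
  haveI : Fintype Γ := Fintype.ofFinite Γ
  -- set up the O-module structure on M
  letI instOM : Module O M := Module.compHom M (algebraMap O AG)
  haveI towOAM : IsScalarTower O AG M := by
    constructor
    intro c a x
    show (c • a) • x = (algebraMap O AG c) • (a • x)
    rw [Algebra.smul_def, mul_smul]
  have hOsmul : ∀ (c : O) (x : M), c • x = algebraMap O AG c • x := fun _ _ => rfl
  -- towers and finiteness
  haveI towORA : IsScalarTower O R' AG := IsScalarTower.of_algebraMap_eq (fun c => rfl)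
  haveI finOR : Module.Finite O R' :=
    Module.Finite.of_surjective (Submodule.mkQ (Ideal.span {ϖ ^ s}))
      (Submodule.mkQ_surjective _)
  haveI finRA : Module.Finite R' AG :=
    Module.Finite.equiv ((Finsupp.linearEquivFunOnFinite R' R' Γ).symm.trans (MonoidAlgebra.coeffLinearEquiv R').symm)
  haveI finOA : Module.Finite O AG := Module.Finite.trans R' AG
  haveI finOM : Module.Finite O M := Module.Finite.trans AG M
  -- torsion
  have hkill : ∀ x : M, (ϖ ^ s) • x = 0 := by
    intro x
    rw [hOsmul]
    have : algebraMap O AG (ϖ ^ s) = 0 := by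
      rw [IsScalarTower.algebraMap_apply O R' AG]
      have : (algebraMap O R') (ϖ ^ s) = 0 := by
        rw [Ideal.Quotient.algebraMap_eq, Ideal.Quotient.eq_zero_iff_mem]
        exact Ideal.mem_span_singleton_self _
      rw [this, map_zero]
    rw [this, zero_smul]
  have htors : Module.IsTorsion O M := by
    intro x
    refine ⟨⟨ϖ ^ s, ?_⟩, hkill x⟩
    exact pow_mem (mem_nonZeroDivisors_of_ne_zero hϖ.ne_zero) s
  -- structure theorem
  obtain ⟨ι, hfι, p, hp, e, ⟨eqv⟩⟩ := Module.equiv_directSum_of_isTorsion (R := O) (M := M) htors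
  haveI := hfι
  -- each p i is associated to ϖ
  have hassoc : ∀ i, Associated (p i) ϖ := fun i =>
    IsDiscreteValuationRing.associated_of_irreducible O (hp i) hϖ
  have hspan : ∀ i, (Ideal.span {p i ^ e i} : Ideal O) = Ideal.span {ϖ ^ e i} := by
    intro i
    exact Ideal.span_singleton_eq_span_singleton.mpr (hassoc i).pow_pow
  -- e i ≤ s
  haveI := Classical.decEq ι
  have he : ∀ i, e i ≤ s := by
    intro i
    set y : ⨁ j : ι, O ⧸ (O ∙ p j ^ e j) :=
      DirectSum.lof O ι (fun j => O ⧸ (O ∙ p j ^ e j)) i (Submodule.Quotient.mk 1) with hy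
    have hy0 : (ϖ ^ s) • y = 0 := by
      have : y = eqv (eqv.symm y) := (eqv.apply_symm_apply y).symm
      rw [this, ← map_smul, hkill, map_zero]
    have hcomp : (ϖ ^ s) • (Submodule.Quotient.mk 1 : O ⧸ (O ∙ p i ^ e i)) = 0 := by
      have := congrArg (fun z => z i) hy0
      simpa [hy, DFinsupp.smul_apply, DirectSum.smul_apply, DirectSum.lof_apply] using this
    rw [← Submodule.Quotient.mk_smul, Submodule.Quotient.mk_eq_zero] at hcomp
    have hmem : (ϖ ^ s : O) ∈ Ideal.span {ϖ ^ e i} := by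
      rw [← hspan i]
      simpa using hcomp
    have hdvd : (ϖ ^ e i : O) ∣ ϖ ^ s := Ideal.mem_span_singleton.mp hmem
    exact (pow_dvd_pow_iff hϖ.ne_zero hϖ.not_isUnit).mp hdvd
  -- the linear functionals ψ i on the cyclic pieces
  have hψ : ∀ i, ∃ ψ : (O ⧸ (O ∙ p i ^ e i)) →ₗ[O] R', Function.Injective ψ := by
    intro i
    have hei := he i
    have hdvd_pe : (ϖ ^ e i : O) ∣ p i ^ e i := ((hassoc i).pow_pow).symm.dvd
    set g : O →ₗ[O] R' := (ϖ ^ (s - e i)) • (Submodule.mkQ (Ideal.span {ϖ ^ s})) with hg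
    have hgapply : ∀ a : O, g a = Submodule.Quotient.mk (ϖ ^ (s - e i) * a) := by
      intro a
      simp [hg, Submodule.Quotient.mk_smul]
      rfl
    have hle : (O ∙ p i ^ e i) ≤ LinearMap.ker g := by
      rw [Submodule.span_le]
      intro z hz
      rw [Set.mem_singleton_iff] at hz
      subst hz
      rw [SetLike.mem_coe, LinearMap.mem_ker, hgapply, Submodule.Quotient.mk_eq_zero]
      have : (ϖ ^ s : O) ∣ ϖ ^ (s - e i) * p i ^ e i := by
        have h1 : (ϖ ^ s : O) = ϖ ^ (s - e i) * ϖ ^ e i := by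
          rw [← pow_add]
          congr 1
          omega
        rw [h1]
        exact mul_dvd_mul_left _ hdvd_pe
      exact Ideal.mem_span_singleton.mpr this
    refine ⟨Submodule.liftQ _ g hle, ?_⟩
    rw [← LinearMap.ker_eq_bot]
    rw [Submodule.ker_liftQ_eq_bot]
    intro a ha
    rw [LinearMap.mem_ker, hgapply, Submodule.Quotient.mk_eq_zero] at ha
    have hdvd2 : (ϖ ^ s : O) ∣ ϖ ^ (s - e i) * a := Ideal.mem_span_singleton.mp ha
    have h1 : (ϖ ^ s : O) = ϖ ^ (s - e i) * ϖ ^ e i := by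
      rw [← pow_add]; congr 1; omega
    rw [h1] at hdvd2
    have hdvd3 : (ϖ ^ e i : O) ∣ a :=
      (mul_dvd_mul_iff_left (pow_ne_zero _ hϖ.ne_zero)).mp hdvd2
    have hdvd4 : (p i ^ e i : O) ∣ a := ((hassoc i).pow_pow).dvd_iff_dvd_left.mpr hdvd3
    obtain ⟨c, hc⟩ := hdvd4
    refine Submodule.mem_span_singleton.mpr ⟨c, ?_⟩
    rw [hc]; rw [smul_eq_mul]; ring
  choose ψ hψinj using hψ
  -- the O-linear functionals on M
  set Lφ : ι → (M →ₗ[O] R') := fun i =>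
    (ψ i) ∘ₗ (DFinsupp.lapply i : _ →ₗ[O] _) ∘ₗ (eqv.toLinearMap) with hLφ
  have hLφsep : ∀ x : M, (∀ i, Lφ i x = 0) → x = 0 := by
    intro x hx
    have : eqv x = 0 := by
      refine DFinsupp.ext fun i => ?_
      have h4 := hx i
      simp only [hLφ, LinearMap.comp_apply, LinearEquiv.coe_toLinearMap] at h4
      have h6 : (ψ i) ((eqv x) i) = 0 := h4
      simp only [DFinsupp.zero_apply]
      exact hψinj i (h6.trans (map_zero (ψ i)).symm)
    simpa using congrArg eqv.symm this
  -- upgrade to AG-linear maps into AG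
  have hΦ : ∀ i, ∃ Φ : M →ₗ[AG] AG, ∀ x, (Φ x).coeff (1 : Γ) = Lφ i x := by
    intro i
    refine aux_phi_to_A ϖ s (fun x => Lφ i x) (fun x y => map_add _ x y) ?_
    intro r x
    obtain ⟨c, rfl⟩ := Ideal.Quotient.mk_surjective r
    have h1 : (algebraMap R' AG (Ideal.Quotient.mk _ c)) • x = c • x := by
      rw [hOsmul, IsScalarTower.algebraMap_apply O R' AG, Ideal.Quotient.algebraMap_eq]
    simp only [h1, map_smul]
    rw [Algebra.smul_def, Ideal.Quotient.algebraMap_eq]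
  choose Φ hΦ1 using hΦ
  -- assemble
  refine ⟨Fintype.card ι, LinearMap.pi (fun j => Φ ((Fintype.equivFin ι).symm j)), ?_⟩
  have hzero : ∀ x : M, (∀ j, Φ ((Fintype.equivFin ι).symm j) x = 0) → x = 0 := by
    intro x hx
    refine hLφsep x fun i => ?_
    have h2 := hx (Fintype.equivFin ι i)
    rw [Equiv.symm_apply_apply] at h2
    rw [← hΦ1 i x, h2]
    rfl
  intro a b hab
  have h3 : ∀ j, Φ ((Fintype.equivFin ι).symm j) (a - b) = 0 := by
    intro j
    rw [map_sub, sub_eq_zero]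
    exact congrFun hab j
  have := hzero (a - b) h3
  exact sub_eq_zero.mp this

lemma aux_key (hϖ : Irreducible ϖ) (n : ℕ)
    (I : ℕ → Type uI) [∀ j, AddCommGroup (I j)] [∀ j, Module AG (I j)]
    (d : ∀ j, I j →ₗ[AG] I (j + 1))
    (htriv : Subsingleton (I (n + 1)))
    (hBaer : ∀ j, j ≤ n → Module.Baer AG (I j))
    (hex : ∀ j, j < n → Function.Exact (d j) (d (j + 1))) :
    ∀ t j, j + t = n → ∀ (M : Type (max u₁ u₃)) [AddCommGroup M] [Module AG M]
      [Module.Finite AG M] (f : M →ₗ[AG] LinearMap.range (d j)),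
      ∃ g : M →ₗ[AG] I j, (d j).rangeRestrict ∘ₗ g = f := by
  intro t
  induction t with
  | zero =>
    intro j hj M _ _ _ f
    have hjn : j = n := by omega
    subst hjn
    refine ⟨0, ?_⟩
    ext x
    exact Subsingleton.elim _ _
  | succ t ih =>
    intro j hj M _ _ _ f
    have hj1 : (j + 1) + t = n := by omega
    have hjn : j < n := by omega
    obtain ⟨m, a, ha⟩ := aux_embed_free (Γ := Γ) ϖ s hϖ (M := M)
    have hexj := (LinearMap.exact_iff.mp (hex j hjn))
    -- extend the composite M → I (j+1) along a
    obtain ⟨u, hu⟩ := (hBaer (j + 1) (by omega)).extension_property a ha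
      ((LinearMap.range (d j)).subtype ∘ₗ f)
    set q : (Fin m → AG) →ₗ[AG] LinearMap.range (d (j + 1)) :=
      (d (j + 1)).rangeRestrict ∘ₗ u with hq
    have hqa : LinearMap.range a ≤ LinearMap.ker q := by
      rintro _ ⟨x, rfl⟩
      rw [LinearMap.mem_ker, hq, LinearMap.comp_apply]
      apply Subtype.ext
      have h1 : u (a x) = ((f x : I (j + 1))) := by
        have := LinearMap.congr_fun hu x
        simpa using this
      show (d (j + 1)) (u (a x)) = 0
      rw [h1]
      have h2 : ((f x : I (j + 1))) ∈ LinearMap.ker (d (j + 1)) := by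
        rw [hexj]
        exact (f x).2
      exact h2
    set v : ((Fin m → AG) ⧸ LinearMap.range a) →ₗ[AG] LinearMap.range (d (j + 1)) :=
      Submodule.liftQ _ q hqa with hv
    obtain ⟨w, hw⟩ := ih (j + 1) hj1 ((Fin m → AG) ⧸ LinearMap.range a) v
    set u' : (Fin m → AG) →ₗ[AG] I (j + 1) :=
      u - w ∘ₗ (Submodule.mkQ (LinearMap.range a)) with hu'
    have hu'mem : ∀ y, u' y ∈ LinearMap.range (d j) := by
      intro y
      rw [← hexj, LinearMap.mem_ker]
      have h3 : (d (j + 1)).rangeRestrict (w ((Submodule.mkQ (LinearMap.range a)) y))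
          = q y := by
        have h := LinearMap.congr_fun hw ((Submodule.mkQ (LinearMap.range a)) y)
        simp only [LinearMap.comp_apply] at h
        rw [h, hv, Submodule.mkQ_apply, Submodule.liftQ_apply]
      have h4 : (d (j + 1)) (u' y)
          = ((d (j + 1)).rangeRestrict (u y) : I (j + 2))
            - ((d (j + 1)).rangeRestrict (w ((Submodule.mkQ (LinearMap.range a)) y)) : I (j + 2)) := by
        rw [hu']
        simp
      rw [h4, h3, hq]
      simp
    set t' : (Fin m → AG) →ₗ[AG] LinearMap.range (d j) :=
      LinearMap.codRestrict _ u' hu'mem with ht'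
    obtain ⟨T, hT⟩ := Module.projective_lifting_property ((d j).rangeRestrict) t'
      (d j).surjective_rangeRestrict
    refine ⟨T ∘ₗ a, ?_⟩
    apply LinearMap.ext
    intro x
    apply Subtype.ext
    have h5 : (d j).rangeRestrict (T (a x)) = t' (a x) := LinearMap.congr_fun hT (a x)
    simp only [LinearMap.comp_apply]
    rw [h5]
    show u' (a x) = (f x : I (j + 1))
    rw [hu']
    have h6 : (Submodule.mkQ (LinearMap.range a)) (a x) = 0 := by
      rw [Submodule.mkQ_apply, Submodule.Quotient.mk_eq_zero]
      exact ⟨x, rfl⟩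
    have h7 : u (a x) = ((f x : I (j + 1))) := by
      have := LinearMap.congr_fun hu x
      simpa using this
    simp [h6, h7]

end AuxStmt0

/-- Let `O` be a DVR with uniformizer `ϖ`, `s ≥ 1`, `R = O/ϖ^s O`, and `Γ` a
finite group.  If `V` is a finitely generated `R[Γ]`-module of finite injective dimension
(i.e. there is a finite exact resolution `0 → V → I 0 → I 1 → ⋯ → I n → 0` with each `I j`
an injective `R[Γ]`-module; here the modules `I j` for `j > n` are zero), then `V` is an
injective `R[Γ]`-module. -/
theorem stmt0 (O : Type*) [CommRing O] [IsDomain O] [IsDiscreteValuationRing O]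
    (ϖ : O) (hϖ : Irreducible ϖ) (s : ℕ) (hs : 1 ≤ s)
    (Γ : Type*) [Group Γ] [Finite Γ]
    (V : Type*) [AddCommGroup V]
    [Module (MonoidAlgebra (O ⧸ Ideal.span {ϖ ^ s}) Γ) V]
    [Module.Finite (MonoidAlgebra (O ⧸ Ideal.span {ϖ ^ s}) Γ) V]
    (n : ℕ) (I : ℕ → Type*) [∀ j, AddCommGroup (I j)]
    [∀ j, Module (MonoidAlgebra (O ⧸ Ideal.span {ϖ ^ s}) Γ) (I j)]
    (f₀ : V →ₗ[MonoidAlgebra (O ⧸ Ideal.span {ϖ ^ s}) Γ] I 0)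
    (d : ∀ j, I j →ₗ[MonoidAlgebra (O ⧸ Ideal.span {ϖ ^ s}) Γ] I (j + 1))
    (htriv : ∀ j, n < j → Subsingleton (I j))
    (hinjmod : ∀ j, j ≤ n → Module.Injective (MonoidAlgebra (O ⧸ Ideal.span {ϖ ^ s}) Γ) (I j))
    (hf₀ : Function.Injective f₀)
    (hex₀ : Function.Exact f₀ (d 0))
    (hex : ∀ j, j < n → Function.Exact (d j) (d (j + 1))) :
    Module.Injective (MonoidAlgebra (O ⧸ Ideal.span {ϖ ^ s}) Γ) V := by
  by_cases htrivV : Subsingleton V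
  · exact ⟨fun X Y _ _ _ _ f hf g => ⟨0, fun x => Subsingleton.elim _ _⟩⟩
  · haveI : Nontrivial V := not_subsingleton_iff_nontrivial.mp htrivV
    obtain ⟨v, hv⟩ := exists_ne (0 : V)
    have hf₀v : f₀ v ≠ 0 := by
      intro h
      exact hv (hf₀ (by rw [h, map_zero]))
    haveI hsk := aux_small_k (Γ := Γ) ϖ s hϖ (f₀ v) hf₀v
    haveI hsA := aux_small_A (Γ := Γ) ϖ s hs hsk
    have hBaer : ∀ j, j ≤ n → Module.Baer (MonoidAlgebra (O ⧸ Ideal.span {ϖ ^ s}) Γ) (I j) :=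
      fun j hj => Module.Baer.of_injective (hinjmod j hj)
    haveI htrivI : Subsingleton (I (n + 1)) := htriv (n + 1) (by omega)
    have key := aux_key ϖ s hϖ n I d htrivI hBaer hex
    refine Module.Baer.injective ?_
    intro J g
    obtain ⟨G, hG⟩ := (hBaer 0 (Nat.zero_le n)).extension_property J.subtype
      (Submodule.injective_subtype J) (f₀ ∘ₗ g)
    set q : MonoidAlgebra (O ⧸ Ideal.span {ϖ ^ s}) Γ
        →ₗ[MonoidAlgebra (O ⧸ Ideal.span {ϖ ^ s}) Γ] LinearMap.range (d 0) :=
      (d 0).rangeRestrict ∘ₗ G with hqdef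
    have hqJ : J ≤ LinearMap.ker q := by
      intro x hx
      rw [LinearMap.mem_ker, hqdef, LinearMap.comp_apply]
      apply Subtype.ext
      have h1 : G x = f₀ (g ⟨x, hx⟩) := by
        have := LinearMap.congr_fun hG ⟨x, hx⟩
        simpa using this
      show (d 0) (G x) = 0
      rw [h1]
      exact hex₀.apply_apply_eq_zero (g ⟨x, hx⟩)
    set vbar := Submodule.liftQ J q hqJ with hvbar
    obtain ⟨w, hw⟩ := key n 0 (by omega) ((MonoidAlgebra (O ⧸ Ideal.span {ϖ ^ s}) Γ) ⧸ J) vbar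
    set G' := G - w ∘ₗ (Submodule.mkQ J) with hG'
    have hexeq : LinearMap.ker (d 0) = LinearMap.range f₀ := LinearMap.exact_iff.mp hex₀
    have hG'mem : ∀ y, G' y ∈ LinearMap.range f₀ := by
      intro y
      rw [← hexeq, LinearMap.mem_ker]
      have h3 : (d 0).rangeRestrict (w ((Submodule.mkQ J) y)) = q y := by
        have h := LinearMap.congr_fun hw ((Submodule.mkQ J) y)
        simp only [LinearMap.comp_apply] at h
        rw [h, hvbar, Submodule.mkQ_apply, Submodule.liftQ_apply]
      have h4 : (d 0) (G' y) = ((d 0).rangeRestrict (G y) : I 1)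
          - ((d 0).rangeRestrict (w ((Submodule.mkQ J) y)) : I 1) := by
        rw [hG']
        simp
      rw [h4, h3, hqdef]
      simp
    set e := LinearEquiv.ofInjective f₀ hf₀ with he
    refine ⟨(e.symm : LinearMap.range f₀ →ₗ[_] V) ∘ₗ LinearMap.codRestrict _ G' hG'mem, ?_⟩
    intro x hx
    have h1 : G x = f₀ (g ⟨x, hx⟩) := by
      have := LinearMap.congr_fun hG ⟨x, hx⟩
      simpa using this
    have h6 : (Submodule.mkQ J) x = 0 := by
      rw [Submodule.mkQ_apply, Submodule.Quotient.mk_eq_zero]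
      exact hx
    have h7 : G' x = f₀ (g ⟨x, hx⟩) := by
      rw [hG']
      simp [h6, h1]
    have h8 : LinearMap.codRestrict _ G' hG'mem x = e (g ⟨x, hx⟩) := by
      apply Subtype.ext
      rw [he]
      show G' x = _
      rw [h7]
      rfl
    simp only [LinearMap.comp_apply, h8]
    exact e.symm_apply_apply _
end

section
/- Let O be a discrete valuation ring with uniformizer ϖ, let s ≥ 1 be an integer, and let R = O/ϖ^s O. For every finitely generated R-module V, the natural evaluation map V → Hom_R(Hom_R(V, R), R), sending v to the map f ↦ f(v), is an isomorphism of R-modules. -/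
open Function

section Bieval

variable (A : Type*) [CommRing A] (E : Type*) [AddCommGroup E] [Module A E]
variable (M : Type*) [AddCommGroup M] [Module A M]

/-- Evaluation into the double `E`-dual. -/
noncomputable def bieval : M →ₗ[A] ((M →ₗ[A] E) →ₗ[A] E) :=
  LinearMap.flip LinearMap.id

@[simp] lemma bieval_apply (v : M) (f : M →ₗ[A] E) : bieval A E M v f = f v := rfl

variable {M} {N : Type*} [AddCommGroup N] [Module A N]

lemma bieval_congr (e : M ≃ₗ[A] N) (h : Bijective (bieval A E N)) :
    Bijective (bieval A E M) := by
  let a : (M →ₗ[A] E) ≃ₗ[A] (N →ₗ[A] E) := e.arrowCongr (LinearEquiv.refl A E)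
  let b : ((M →ₗ[A] E) →ₗ[A] E) ≃ₗ[A] ((N →ₗ[A] E) →ₗ[A] E) :=
    a.arrowCongr (LinearEquiv.refl A E)
  have key : ⇑(bieval A E M) = ⇑b.symm ∘ ⇑(bieval A E N) ∘ ⇑e := by
    funext v
    apply b.injective
    ext g
    simp [a, b, LinearEquiv.arrowCongr]
  rw [key]
  exact b.symm.bijective.comp (h.comp e.bijective)

lemma bieval_pi {ι : Type*} [Fintype ι] (M : ι → Type*) [∀ i, AddCommGroup (M i)]
    [∀ i, Module A (M i)] (h : ∀ i, Bijective (bieval A E (M i))) :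
    Bijective (bieval A E (∀ i, M i)) := by
  classical
  let L : (∀ i, M i →ₗ[A] E) ≃ₗ[A] ((∀ i, M i) →ₗ[A] E) := LinearMap.lsum A M A
  let L' : (∀ i, (M i →ₗ[A] E) →ₗ[A] E) ≃ₗ[A] ((∀ i, M i →ₗ[A] E) →ₗ[A] E) :=
    LinearMap.lsum A (fun i => M i →ₗ[A] E) A
  let c : ((∀ i, M i) →ₗ[A] E) ≃ₗ[A] (∀ i, M i →ₗ[A] E) := L.symm
  let b : (((∀ i, M i) →ₗ[A] E) →ₗ[A] E) ≃ₗ[A] ((∀ i, M i →ₗ[A] E) →ₗ[A] E) :=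
    c.arrowCongr (LinearEquiv.refl A E)
  -- the "product of evaluations" map
  have hp : Bijective (fun (x : ∀ i, M i) (i : ι) => bieval A E (M i) (x i)) := by
    constructor
    · intro x y hxy
      funext i
      exact (h i).1 (congrFun hxy i)
    · intro y
      choose x hx using fun i => (h i).2 (y i)
      exact ⟨x, funext hx⟩
  have key : ⇑(bieval A E (∀ i, M i)) =
      ⇑b.symm ∘ ⇑L' ∘ (fun (x : ∀ i, M i) (i : ι) => bieval A E (M i) (x i)) := by
    funext x
    apply b.injective
    ext f
    simp only [b, c, L, L', LinearEquiv.arrowCongr, LinearMap.lsum_apply, bieval_apply,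
      LinearEquiv.coe_mk, LinearMap.coe_comp, Function.comp_apply, LinearMap.coe_sum,
      Finset.sum_apply, LinearMap.proj_apply, LinearEquiv.refl_apply, LinearEquiv.symm_symm,
      LinearEquiv.apply_symm_apply]
    simp [Pi.single_apply, ite_apply, Finset.sum_ite_eq, Finset.sum_ite_eq', apply_ite, map_zero]
  rw [key]
  exact b.symm.bijective.comp ((L'.bijective).comp hp)

end Bieval

section Cyclic

variable {O : Type*} [CommRing O] [IsDomain O]

/-- The linear map `O ⧸ (ϖ^k) →ₗ O ⧸ (ϖ^s)` induced by multiplication by `ϖ^(s-k)`. -/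
noncomputable def cycGen (ϖ : O) (s k : ℕ) :
    (O ⧸ Ideal.span {ϖ ^ k}) →ₗ[O] (O ⧸ Ideal.span {ϖ ^ s}) := by
  refine Submodule.liftQ _ ((Ideal.span {ϖ ^ s}).mkQ.comp
    (LinearMap.toSpanSingleton O O (ϖ ^ (s - k)))) ?_
  intro x hx
  obtain ⟨c, rfl⟩ := Ideal.mem_span_singleton.mp hx
  simp only [LinearMap.mem_ker, LinearMap.coe_comp, Function.comp_apply,
    LinearMap.toSpanSingleton_apply, Submodule.mkQ_apply, smul_eq_mul]
  rw [Submodule.Quotient.mk_eq_zero]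
  refine Ideal.mem_span_singleton.mpr (dvd_trans (pow_dvd_pow ϖ (by omega : s ≤ k + (s - k)))
    ⟨c, by rw [pow_add]; ring⟩)

lemma cycGen_mk (ϖ : O) (s k : ℕ) (hk : k ≤ s) (a : O) :
    cycGen ϖ s k (Submodule.Quotient.mk a) = Submodule.Quotient.mk (a * ϖ ^ (s - k)) := rfl

/-- any linear map out of the cyclic module is determined by its value at `mk 1`. -/
lemma cyc_ext {ϖ : O} {k : ℕ} {X : Type*} [AddCommGroup X] [Module O X]
    (f g : (O ⧸ Ideal.span {ϖ ^ k}) →ₗ[O] X)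
    (h : f (Submodule.Quotient.mk 1) = g (Submodule.Quotient.mk 1)) : f = g := by
  apply Submodule.linearMap_qext
  ext
  simpa using h

lemma div_lemma {ϖ : O} (hϖ0 : ϖ ≠ 0) {s k : ℕ} (hk : k ≤ s)
    (x : O ⧸ Ideal.span {ϖ ^ s}) (hx : ϖ ^ k • x = 0) :
    ∃ c : O, x = Submodule.Quotient.mk (ϖ ^ (s - k) * c) := by
  obtain ⟨a, rfl⟩ := Submodule.Quotient.mk_surjective _ x
  rw [← Submodule.Quotient.mk_smul, Submodule.Quotient.mk_eq_zero, smul_eq_mul,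
    Ideal.mem_span_singleton] at hx
  obtain ⟨b, hb⟩ := hx
  refine ⟨b, ?_⟩
  have : ϖ ^ k * a = ϖ ^ k * (ϖ ^ (s - k) * b) := by
    rw [hb, ← mul_assoc, ← pow_add]
    congr 2
    omega
  have := mul_left_cancel₀ (pow_ne_zero k hϖ0) this
  rw [this]

lemma dual_gen {ϖ : O} (hϖ0 : ϖ ≠ 0) {s k : ℕ} (hk : k ≤ s)
    (f : (O ⧸ Ideal.span {ϖ ^ k}) →ₗ[O] (O ⧸ Ideal.span {ϖ ^ s})) :
    ∃ c : O, f = c • cycGen ϖ s k := by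
  have hmk : (Submodule.Quotient.mk (ϖ ^ k) : O ⧸ Ideal.span {ϖ ^ k}) = 0 := by
    rw [Submodule.Quotient.mk_eq_zero]
    exact Ideal.mem_span_singleton.mpr dvd_rfl
  have hkil : ϖ ^ k • f (Submodule.Quotient.mk 1) = 0 := by
    rw [← map_smul, ← Submodule.Quotient.mk_smul, smul_eq_mul, mul_one, hmk, map_zero]
  obtain ⟨c, hc⟩ := div_lemma hϖ0 hk _ hkil
  refine ⟨c, cyc_ext _ _ ?_⟩
  rw [hc, LinearMap.smul_apply, cycGen_mk ϖ s k hk, one_mul, ← Submodule.Quotient.mk_smul,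
    smul_eq_mul, mul_comm]

lemma bieval_cyclic {ϖ : O} (hϖ0 : ϖ ≠ 0) {s k : ℕ} (hk : k ≤ s) :
    Function.Bijective (bieval O (O ⧸ Ideal.span {ϖ ^ s}) (O ⧸ Ideal.span {ϖ ^ k})) := by
  constructor
  · rw [← LinearMap.ker_eq_bot]
    rw [LinearMap.ker_eq_bot']
    intro v hv
    obtain ⟨a, rfl⟩ := Submodule.Quotient.mk_surjective _ v
    have h0 : cycGen ϖ s k (Submodule.Quotient.mk a) = 0 := by
      have := congrArg (fun Φ => Φ (cycGen ϖ s k)) hv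
      simpa using this
    rw [cycGen_mk ϖ s k hk, Submodule.Quotient.mk_eq_zero, Ideal.mem_span_singleton] at h0
    obtain ⟨b, hb⟩ := h0
    rw [Submodule.Quotient.mk_eq_zero, Ideal.mem_span_singleton]
    refine ⟨b, mul_left_cancel₀ (pow_ne_zero (s - k) hϖ0) ?_⟩
    calc ϖ ^ (s - k) * a = a * ϖ ^ (s - k) := mul_comm _ _
    _ = ϖ ^ s * b := hb
    _ = ϖ ^ (s - k) * (ϖ ^ k * b) := by rw [← mul_assoc, ← pow_add]; congr 2; omega
  · intro Φ
    have hkil : ϖ ^ k • Φ (cycGen ϖ s k) = 0 := by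
      rw [← map_smul]
      have : ϖ ^ k • cycGen ϖ s k = 0 := by
        apply cyc_ext
        rw [LinearMap.smul_apply, cycGen_mk ϖ s k hk, one_mul, ← Submodule.Quotient.mk_smul,
          smul_eq_mul, ← pow_add, LinearMap.zero_apply]
        rw [Submodule.Quotient.mk_eq_zero, Ideal.mem_span_singleton]
        exact pow_dvd_pow ϖ (by omega)
      rw [this, map_zero]
    obtain ⟨c, hc⟩ := div_lemma hϖ0 hk _ hkil
    refine ⟨Submodule.Quotient.mk c, ?_⟩
    ext f
    obtain ⟨d, rfl⟩ := dual_gen hϖ0 hk f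
    rw [bieval_apply, LinearMap.smul_apply, map_smul, cycGen_mk ϖ s k hk, hc]
    exact congrArg (fun z => d • Submodule.Quotient.mk z) (mul_comm _ _)

end Cyclic

section Main

universe u v

lemma bieval_main {O : Type u} [CommRing O] [IsDomain O] [IsPrincipalIdealRing O]
    {ϖ : O} (hϖ : Irreducible ϖ) (s : ℕ)
    (W : Type v) [AddCommGroup W] [Module O W] [Module.Finite O W]
    (hT : ∀ w : W, ϖ ^ s • w = 0) :
    Function.Bijective (bieval O (O ⧸ Ideal.span {ϖ ^ s}) W) := by
  classical
  -- lift to the right universe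
  let W' : Type (max u v) := ULift.{u} W
  let eW : W' ≃ₗ[O] W := ULift.moduleEquiv
  haveI : Module.Finite O W' := Module.Finite.equiv eW.symm
  have hT2 : ∀ x : W', ϖ ^ s • x = 0 := fun x =>
    eW.injective (by rw [map_smul, map_zero]; exact hT (eW x))
  have hT' : Module.IsTorsion' W' (Submonoid.powers ϖ) := fun x =>
    ⟨⟨ϖ ^ s, ⟨s, rfl⟩⟩, hT2 x⟩
  obtain ⟨d, k, ⟨f⟩⟩ := Module.torsion_by_prime_power_decomposition hϖ hT'
  have hk : ∀ i, k i ≤ s := by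
    intro i
    have h3 := hT2 (f.symm (DirectSum.lof O (Fin d)
      (fun i => O ⧸ (O ∙ ϖ ^ k i)) i (Submodule.Quotient.mk 1)))
    have h4 := congrArg f h3
    rw [map_smul, f.apply_symm_apply, map_zero] at h4
    have h5 := congrArg (DirectSum.component O (Fin d) (fun i => O ⧸ (O ∙ ϖ ^ k i)) i) h4
    rw [map_smul, DirectSum.component.lof_self, map_zero] at h5
    rw [← Submodule.Quotient.mk_smul, smul_eq_mul, mul_one, Submodule.Quotient.mk_eq_zero] at h5
    obtain ⟨a, ha⟩ := Submodule.mem_span_singleton.mp h5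
    have : ϖ ^ k i ∣ ϖ ^ s := ⟨a, by rw [← ha]; rw [smul_eq_mul, mul_comm]⟩
    exact (pow_dvd_pow_iff hϖ.ne_zero hϖ.not_isUnit).mp this
  have hpi : Function.Bijective (bieval O (O ⧸ Ideal.span {ϖ ^ s})
      (∀ i : Fin d, O ⧸ (O ∙ ϖ ^ k i))) :=
    bieval_pi _ _ _ fun i => bieval_cyclic hϖ.ne_zero (hk i)
  exact bieval_congr _ _ ((eW.symm.trans f).trans
    (DirectSum.linearEquivFunOnFintype O (Fin d) (fun i => O ⧸ (O ∙ ϖ ^ k i)))) hpi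

end Main

/-- For `R = O/ϖ^s O` (with `O` a DVR, `ϖ` a uniformizer, `s ≥ 1`) and every
finitely generated `R`-module `V`, the evaluation map `V → Hom_R(Hom_R(V, R), R)`,
`v ↦ (f ↦ f v)`, is an isomorphism of `R`-modules. -/
theorem stmt4 (O : Type*) [CommRing O] [IsDomain O] [IsDiscreteValuationRing O]
    (ϖ : O) (hϖ : Irreducible ϖ) (s : ℕ) (hs : 1 ≤ s)
    (V : Type*) [AddCommGroup V] [Module (O ⧸ Ideal.span {ϖ ^ s}) V]
    [Module.Finite (O ⧸ Ideal.span {ϖ ^ s}) V] :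
    Function.Bijective (Module.Dual.eval (O ⧸ Ideal.span {ϖ ^ s}) V) := by
  classical
  letI : Module O V := Module.compHom V (Ideal.Quotient.mk (Ideal.span {ϖ ^ s}))
  -- the O-action on R = O ⧸ Ideal.span {ϖ ^ s}
  have hsmul : ∀ (a : O) (x : O ⧸ Ideal.span {ϖ ^ s}), a • x = Ideal.Quotient.mk (Ideal.span {ϖ ^ s}) a * x := by
    intro a x
    obtain ⟨b, rfl⟩ := Ideal.Quotient.mk_surjective x
    rw [← map_mul]
    rfl
  -- V is finitely generated over O
  haveI hfinO : Module.Finite O V := by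
    obtain ⟨S, hS⟩ := (inferInstance : Module.Finite (O ⧸ Ideal.span {ϖ ^ s}) V).fg_top
    refine ⟨⟨S, top_le_iff.mp ?_⟩⟩
    intro v _
    have hv : v ∈ Submodule.span (O ⧸ Ideal.span {ϖ ^ s}) (S : Set V) := by rw [hS]; trivial
    refine Submodule.span_induction (fun x hx => Submodule.subset_span hx)
      (Submodule.zero_mem _) (fun x y _ _ hx hy => Submodule.add_mem _ hx hy) ?_ hv
    intro r x _ hx
    obtain ⟨a, rfl⟩ := Ideal.Quotient.mk_surjective r
    exact Submodule.smul_mem _ a hx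
  -- V is killed by ϖ ^ s over O
  have hT : ∀ v : V, ϖ ^ s • v = 0 := by
    intro v
    show (Ideal.Quotient.mk (Ideal.span {ϖ ^ s}) (ϖ ^ s)) • v = 0
    rw [Ideal.Quotient.eq_zero_iff_mem.mpr (Ideal.mem_span_singleton.mpr dvd_rfl), zero_smul]
  -- promotion of an O-linear map into R to an R-linear map
  let up : (V →ₗ[O] (O ⧸ Ideal.span {ϖ ^ s})) → (V →ₗ[O ⧸ Ideal.span {ϖ ^ s}] (O ⧸ Ideal.span {ϖ ^ s})) := fun g =>
    { toFun := g
      map_add' := g.map_add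
      map_smul' := by
        intro r v
        obtain ⟨a, rfl⟩ := Ideal.Quotient.mk_surjective r
        show g (Ideal.Quotient.mk (Ideal.span {ϖ ^ s}) a • v) = Ideal.Quotient.mk (Ideal.span {ϖ ^ s}) a • g v
        have h1 : (Ideal.Quotient.mk (Ideal.span {ϖ ^ s}) a) • v = a • v := rfl
        rw [h1, g.map_smul, hsmul]
        rfl }
  let down : (V →ₗ[O ⧸ Ideal.span {ϖ ^ s}] (O ⧸ Ideal.span {ϖ ^ s})) → (V →ₗ[O] (O ⧸ Ideal.span {ϖ ^ s})) := fun f =>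
    { toFun := f
      map_add' := f.map_add
      map_smul' := by
        intro a v
        show f ((Ideal.Quotient.mk (Ideal.span {ϖ ^ s}) a) • v) = a • f v
        rw [f.map_smul, hsmul]
        rfl }
  -- the comparison equivalence between the two double duals
  let Ψ : ((V →ₗ[O ⧸ Ideal.span {ϖ ^ s}] (O ⧸ Ideal.span {ϖ ^ s})) →ₗ[O ⧸ Ideal.span {ϖ ^ s}] (O ⧸ Ideal.span {ϖ ^ s})) ≃
      ((V →ₗ[O] (O ⧸ Ideal.span {ϖ ^ s})) →ₗ[O] (O ⧸ Ideal.span {ϖ ^ s})) :=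
    { toFun := fun Φ =>
        { toFun := fun g => Φ (up g)
          map_add' := by
            intro g g'
            show Φ (up (g + g')) = Φ (up g) + Φ (up g')
            have : up (g + g') = up g + up g' := LinearMap.ext fun _ => rfl
            rw [this, map_add]
          map_smul' := by
            intro a g
            show Φ (up (a • g)) = a • Φ (up g)
            have : up (a • g) = (Ideal.Quotient.mk (Ideal.span {ϖ ^ s}) a) • up g := by
              apply LinearMap.ext
              intro v
              show a • g v = (Ideal.Quotient.mk (Ideal.span {ϖ ^ s}) a) • g v
              rw [hsmul]
              rfl
            rw [this, map_smul]
            show (Ideal.Quotient.mk (Ideal.span {ϖ ^ s}) a) • Φ (up g) = a • Φ (up g)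
            rw [hsmul]
            rfl }
      invFun := fun Φ =>
        { toFun := fun f => Φ (down f)
          map_add' := by
            intro f f'
            show Φ (down (f + f')) = Φ (down f) + Φ (down f')
            have : down (f + f') = down f + down f' := LinearMap.ext fun _ => rfl
            rw [this, map_add]
          map_smul' := by
            intro r f
            obtain ⟨a, rfl⟩ := Ideal.Quotient.mk_surjective r
            show Φ (down ((Ideal.Quotient.mk (Ideal.span {ϖ ^ s}) a) • f)) = (Ideal.Quotient.mk (Ideal.span {ϖ ^ s}) a) • Φ (down f)
            have : down ((Ideal.Quotient.mk (Ideal.span {ϖ ^ s}) a) • f) = a • down f := by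
              apply LinearMap.ext
              intro v
              show (Ideal.Quotient.mk (Ideal.span {ϖ ^ s}) a) • f v = a • f v
              rw [hsmul]
              rfl
            rw [this, map_smul]
            show a • Φ (down f) = (Ideal.Quotient.mk (Ideal.span {ϖ ^ s}) a) • Φ (down f)
            rw [hsmul]
            rfl }
      left_inv := by
        intro Φ
        apply LinearMap.ext
        intro f
        show Φ (up (down f)) = Φ f
        rfl
      right_inv := by
        intro Φ
        apply LinearMap.ext
        intro g
        show Φ (down (up g)) = Φ g
        rfl }
  have key : ⇑Ψ ∘ ⇑(Module.Dual.eval (O ⧸ Ideal.span {ϖ ^ s}) V) = ⇑(bieval O (O ⧸ Ideal.span {ϖ ^ s}) V) :=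
    funext fun v => LinearMap.ext fun g => rfl
  have h2 : ⇑(Module.Dual.eval (O ⧸ Ideal.span {ϖ ^ s}) V) =
      ⇑Ψ.symm ∘ (⇑Ψ ∘ ⇑(Module.Dual.eval (O ⧸ Ideal.span {ϖ ^ s}) V)) := by
    funext v
    simp
  rw [h2, key]
  exact Ψ.symm.bijective.comp (bieval_main hϖ s V hT)
end

section
/- Let O be a discrete valuation ring with uniformizer ϖ, let s ≥ 1 be an integer, let R = O/ϖ^s O, and let Γ be a finite group. If P is a finitely generated projective left R[Γ]-module, then its dual P' = Hom_R(P, R), with the left R[Γ]-module structure determined by (γ·f)(x) = f(γ⁻¹·x), is an injective R[Γ]-module. -/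
open Function


/-- Injectivity passes to retracts. -/
theorem aux_inj_of_retract {R M N : Type} [Ring R] [AddCommGroup M] [AddCommGroup N]
    [Module R M] [Module R N] (hN : Module.Injective R N)
    (i : M →ₗ[R] N) (r : N →ₗ[R] M) (h : ∀ m, r (i m) = m) : Module.Injective R M := by
  constructor
  intro X Y _ _ _ _ f hf g
  obtain ⟨h', hh⟩ := hN.out f hf (i ∘ₗ g)
  exact ⟨r ∘ₗ h', fun x => by simp [hh x, h]⟩

/-- Injectivity passes to products. -/
theorem aux_inj_pi {R ι : Type} {M : ι → Type} [Ring R] [∀ i, AddCommGroup (M i)]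
    [∀ i, Module R (M i)] (h : ∀ i, Module.Injective R (M i)) :
    Module.Injective R (∀ i, M i) := by
  constructor
  intro X Y _ _ _ _ f hf g
  choose h' hh using fun i => (h i).out f hf ((LinearMap.proj i) ∘ₗ g)
  refine ⟨LinearMap.pi h', fun x => ?_⟩
  ext i
  simpa using hh i x


theorem aux_quot_selfinj (O : Type) [CommRing O] [IsDomain O] [IsDiscreteValuationRing O]
    (ϖ : O) (hϖ : Irreducible ϖ) (s : ℕ) (hs : 1 ≤ s) :
    Module.Injective (O ⧸ Ideal.span {ϖ ^ s}) (O ⧸ Ideal.span {ϖ ^ s}) := by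
  apply Module.Baer.injective
  intro I g
  set R := O ⧸ Ideal.span {ϖ ^ s}
  letI mk : O →+* R := Ideal.Quotient.mk (Ideal.span {ϖ ^ s})
  have hϖ0 : ϖ ≠ 0 := hϖ.ne_zero
  set J : Ideal O := I.comap mk with hJdef
  have hJs : ϖ ^ s ∈ J := by
    simp only [hJdef, Ideal.mem_comap]
    have : mk (ϖ ^ s) = 0 := Ideal.Quotient.eq_zero_iff_mem.2 (Ideal.subset_span rfl)
    rw [this]; exact I.zero_mem
  have hJne : J ≠ ⊥ := by
    intro hbot
    rw [hbot] at hJs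
    exact pow_ne_zero s hϖ0 (Ideal.mem_bot.1 hJs)
  obtain ⟨k, hJ⟩ := IsDiscreteValuationRing.ideal_eq_span_pow_irreducible hJne hϖ
  have hks : k ≤ s := by
    rw [hJ, Ideal.mem_span_singleton] at hJs
    exact (pow_dvd_pow_iff hϖ.ne_zero hϖ.not_isUnit).1 hJs
  -- I = span {mk (ϖ^k)}
  have hImap : I = Ideal.map mk J := by
    rw [hJdef, Ideal.map_comap_of_surjective mk Ideal.Quotient.mk_surjective]
  have hI : I = Ideal.span {mk (ϖ ^ k)} := by
    rw [hImap, hJ, Ideal.map_span]; simp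
  have ht : mk (ϖ ^ k) ∈ I := by rw [hI]; exact Ideal.subset_span rfl
  set c : R := g ⟨mk (ϖ ^ k), ht⟩ with hc
  obtain ⟨u, hu⟩ := Ideal.Quotient.mk_surjective c
  have hann : mk (ϖ ^ (s - k)) * c = 0 := by
    have h1 : mk (ϖ ^ (s - k)) * c = g (mk (ϖ ^ (s - k)) • ⟨mk (ϖ ^ k), ht⟩) := by
      rw [map_smul]; rfl
    have h2 : (mk (ϖ ^ (s - k)) • (⟨mk (ϖ ^ k), ht⟩ : I)) = 0 := by
      ext
      show mk (ϖ ^ (s - k)) * mk (ϖ ^ k) = 0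
      rw [← map_mul, ← pow_add, Nat.sub_add_cancel hks]
      exact Ideal.Quotient.eq_zero_iff_mem.2 (Ideal.subset_span rfl)
    rw [h1, h2, map_zero]
  have hdvd : ϖ ^ k ∣ u := by
    have : mk (ϖ ^ (s - k) * u) = 0 := by rw [map_mul, hu, hann]
    have hmem : ϖ ^ (s - k) * u ∈ Ideal.span {ϖ ^ s} := Ideal.Quotient.eq_zero_iff_mem.1 this
    rw [Ideal.mem_span_singleton] at hmem
    obtain ⟨w, hw⟩ := hmem
    have hss : ϖ ^ s = ϖ ^ (s - k) * ϖ ^ k := by rw [← pow_add, Nat.sub_add_cancel hks]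
    rw [hss] at hw
    have : ϖ ^ (s - k) * u = ϖ ^ (s - k) * (ϖ ^ k * w) := by rw [hw]; ring
    have := mul_left_cancel₀ (pow_ne_zero (s - k) hϖ0) this
    exact ⟨w, this⟩
  obtain ⟨v, hv⟩ := hdvd
  refine ⟨LinearMap.toSpanSingleton R R (mk v), ?_⟩
  intro x hx
  have hx' : x ∈ Ideal.span {mk (ϖ ^ k)} := hI ▸ hx
  rw [Ideal.mem_span_singleton] at hx'
  obtain ⟨a, ha⟩ := hx'
  have hxa : (⟨x, hx⟩ : I) = a • ⟨mk (ϖ ^ k), ht⟩ := by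
    ext; show x = a * mk (ϖ ^ k); rw [ha]; ring
  rw [hxa, map_smul]
  show x • mk v = a • c
  rw [← hu, hv, map_mul, ha, smul_eq_mul, smul_eq_mul]
  ring

section SelfInj

variable {R Γ : Type} [CommRing R] [Group Γ] [Fintype Γ]

local notation "sg" => MonoidAlgebra.single (R := R) (M := Γ)

theorem aux_monoidAlgebra_selfinj (hR : Module.Injective R R) :
    Module.Injective (MonoidAlgebra R Γ) (MonoidAlgebra R Γ) := by
  classical
  constructor
  intro X Y _ _ _ _ ix hix f
  letI : Module R X := Module.compHom X (algebraMap R (MonoidAlgebra R Γ))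
  letI : Module R Y := Module.compHom Y (algebraMap R (MonoidAlgebra R Γ))
  have hXsmul : ∀ (r : R) (x : X), r • x = (algebraMap R (MonoidAlgebra R Γ) r) • x :=
    fun _ _ => rfl
  have hYsmul : ∀ (r : R) (y : Y), r • y = (algebraMap R (MonoidAlgebra R Γ) r) • y :=
    fun _ _ => rfl
  have halg : ∀ r : R, algebraMap R (MonoidAlgebra R Γ) r = sg 1 r := by
    intro r
    simp [MonoidAlgebra.coe_algebraMap]
  set F : X →ₗ[R] R :=
    { toFun := fun x => (f x).coeff 1
      map_add' := fun x y => by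
        show (f (x + y)).coeff 1 = (f x).coeff 1 + (f y).coeff 1; rw [map_add]; rfl
      map_smul' := fun r x => by
        show (f ((algebraMap R (MonoidAlgebra R Γ) r) • x)).coeff 1 = r * (f x).coeff 1
        rw [map_smul, smul_eq_mul, halg r]
        exact MonoidAlgebra.coeff_single_one_mul (f x) r 1 } with hF
  set iR : X →ₗ[R] Y :=
    { toFun := fun x => ix x
      map_add' := fun x y => by show ix (x + y) = ix x + ix y; rw [map_add]
      map_smul' := fun r x => by
        show ix ((algebraMap R (MonoidAlgebra R Γ) r) • x)
          = (algebraMap R (MonoidAlgebra R Γ) r) • ix x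
        rw [map_smul] } with hiR
  obtain ⟨G, hG⟩ := hR.out iR (by exact hix) F
  set g0 : Y → MonoidAlgebra R Γ :=
    fun y => ∑ γ : Γ, sg γ (G (sg γ⁻¹ (1 : R) • y)) with hg0
  have g0add : ∀ y z, g0 (y + z) = g0 y + g0 z := by
    intro y z
    simp only [hg0, smul_add, map_add]
    rw [← Finset.sum_add_distrib]
    refine Finset.sum_congr rfl fun γ _ => ?_
    rw [MonoidAlgebra.single_add]
  have key : ∀ (γ₀ : Γ) (r : R) (y : Y),
      g0 (sg γ₀ r • y) = sg γ₀ r • g0 y := by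
    intro γ₀ r y
    have hsingle_smul : ∀ (x : Γ) (z : Y),
        (sg x r) • z = (algebraMap R (MonoidAlgebra R Γ) r) • ((sg x (1:R)) • z) := by
      intro x z
      rw [← mul_smul, halg]
      congr 1
      rw [MonoidAlgebra.single_mul_single, one_mul, mul_one]
    calc g0 (sg γ₀ r • y)
        = ∑ γ : Γ, sg γ (r * G (sg (γ⁻¹ * γ₀) (1:R) • y)) := by
          rw [hg0]
          refine Finset.sum_congr rfl fun γ _ => ?_
          congr 1
          rw [← mul_smul, MonoidAlgebra.single_mul_single, one_mul,
            hsingle_smul, ← hYsmul, map_smul]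
          rfl
      _ = sg γ₀ r • g0 y := by
          rw [hg0, smul_eq_mul, Finset.mul_sum]
          refine Fintype.sum_equiv (Equiv.mulLeft γ₀⁻¹) _ _ fun γ => ?_
          simp only [Equiv.coe_mulLeft]
          rw [MonoidAlgebra.single_mul_single]
          simp only [mul_inv_rev, inv_inv, mul_inv_cancel_left]
  refine ⟨{ toFun := g0
            map_add' := g0add
            map_smul' := by
              intro a y
              show g0 (a • y) = a • g0 y
              induction a using MonoidAlgebra.induction_linear with
              | zero =>
                  rw [zero_smul, zero_smul]
                  have := g0add 0 0
                  simpa using this.symm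
              | add a b ha hb => rw [add_smul, g0add, ha, hb, add_smul]
              | single γ₀ r => exact key γ₀ r y }, ?_⟩
  intro x
  show g0 (ix x) = f x
  have hcoef : ∀ γ : Γ, G (sg γ⁻¹ (1:R) • ix x) = (f x).coeff γ := by
    intro γ
    rw [← map_smul ix,
      show ix (sg γ⁻¹ (1:R) • x) = iR (sg γ⁻¹ (1:R) • x) from rfl, hG]
    show (f (sg γ⁻¹ (1:R) • x)).coeff 1 = (f x).coeff γ
    rw [map_smul, smul_eq_mul, MonoidAlgebra.coeff_single_mul_apply, one_mul, inv_inv, mul_one]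
  rw [hg0]
  simp only [hcoef]
  apply MonoidAlgebra.coeff_injective
  rw [MonoidAlgebra.coeff_sum]
  simp only [MonoidAlgebra.coeff_single]
  exact Finsupp.univ_sum_single (f x).coeff

end SelfInj


section Main

variable {R Γ : Type} [CommRing R] [Group Γ] [Fintype Γ]

local notation "sg" => MonoidAlgebra.single (R := R) (M := Γ)
local notation "A" => MonoidAlgebra R Γ

theorem aux_dual_injective {P : Type} [AddCommGroup P] [Module R P]
    (ρ : Representation R Γ P)
    (hfin : Module.Finite (MonoidAlgebra R Γ) ρ.asModule)
    (hproj : Module.Projective (MonoidAlgebra R Γ) ρ.asModule)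
    (hAA : Module.Injective (MonoidAlgebra R Γ) (MonoidAlgebra R Γ)) :
    Module.Injective (MonoidAlgebra R Γ) ρ.dual.asModule := by
  classical
  have halg : ∀ r : R, algebraMap R A r = sg 1 r := by
    intro r; simp [MonoidAlgebra.coe_algebraMap]
  have hadd2 : ∀ (u v : MonoidAlgebra R Γ) (γ : Γ), (u + v).coeff γ = u.coeff γ + v.coeff γ :=
    fun _ _ _ => rfl
  -- translation lemmas
  have hsm : ∀ (γ : Γ) (r : R) (m : ρ.asModule),
      ρ.asModuleEquiv ((sg γ r) • m) = r • (ρ γ) (ρ.asModuleEquiv m) := by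
    intro γ r m
    rw [Representation.asModuleEquiv_map_smul, Representation.asAlgebraHom_single]
    rfl
  have hsmd : ∀ (γ : Γ) (r : R) (f : ρ.dual.asModule),
      ρ.dual.asModuleEquiv ((sg γ r) • f)
        = r • ((ρ.dual.asModuleEquiv f) ∘ₗ (ρ γ⁻¹)) := by
    intro γ r f
    rw [Representation.asModuleEquiv_map_smul, Representation.asAlgebraHom_single]
    rfl
  -- a finite presentation with a splitting
  obtain ⟨n, π, hπ⟩ := Module.Finite.exists_fin' A ρ.asModule
  obtain ⟨ii, hii⟩ := Module.projective_lifting_property π LinearMap.id hπ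
  have hii' : ∀ m : ρ.asModule, π (ii m) = m := fun m => congrArg (fun g => g m) hii
  -- basis-like elements of A^n
  set e : Fin n → Γ → (Fin n → A) := fun j γ => Pi.single j (sg γ 1) with he
  have hesmul : ∀ (γ₀ : Γ) (r : R) (j : Fin n) (γ : Γ),
      (sg γ₀ r) • e j γ = Pi.single j (sg (γ₀ * γ) r) := by
    intro γ₀ r j γ
    rw [he]
    have : (sg γ₀ r) • (Pi.single j (sg γ 1) : Fin n → A)
        = Pi.single j ((sg γ₀ r) • (sg γ 1)) := by rw [Pi.single_smul]
    rw [this, smul_eq_mul, MonoidAlgebra.single_mul_single, mul_one]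
  -- the map S : dual P → A^n
  set S0 : ρ.dual.asModule → (Fin n → A) := fun f => fun j =>
    ∑ γ : Γ, sg γ ((ρ.dual.asModuleEquiv f) (ρ.asModuleEquiv (π (e j γ)))) with hS0
  have S00 : S0 0 = 0 := by
    funext j
    rw [hS0]
    simp
  have S0add : ∀ f g, S0 (f + g) = S0 f + S0 g := by
    intro f g
    funext j
    simp only [hS0, map_add, LinearMap.add_apply, MonoidAlgebra.single_add, Pi.add_apply,
      Finset.sum_add_distrib]
  have S0key : ∀ (γ₀ : Γ) (r : R) (f : ρ.dual.asModule),
      S0 ((sg γ₀ r) • f) = (sg γ₀ r) • S0 f := by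
    intro γ₀ r f
    funext j
    have hterm : ∀ γ : Γ, (ρ.dual.asModuleEquiv ((sg γ₀ r) • f))
        (ρ.asModuleEquiv (π (e j γ)))
        = r * (ρ.dual.asModuleEquiv f) (ρ.asModuleEquiv (π (e j (γ₀⁻¹ * γ)))) := by
      intro γ
      rw [hsmd]
      have h1 : (ρ γ₀⁻¹) (ρ.asModuleEquiv (π (e j γ)))
          = ρ.asModuleEquiv (π (e j (γ₀⁻¹ * γ))) := by
        have h2 : (sg γ₀⁻¹ 1) • (e j γ) = e j (γ₀⁻¹ * γ) := by
          rw [hesmul]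
        rw [← h2, map_smul π, hsm, one_smul]
      rw [LinearMap.smul_apply, LinearMap.comp_apply, h1, smul_eq_mul]
    show (∑ γ : Γ, sg γ _) = ((sg γ₀ r) • S0 f) j
    simp only [hterm]
    show _ = (sg γ₀ r) * (S0 f j)
    rw [hS0, Finset.mul_sum]
    refine Fintype.sum_equiv (Equiv.mulLeft γ₀⁻¹) _ _ fun γ => ?_
    simp only [Equiv.coe_mulLeft]
    rw [MonoidAlgebra.single_mul_single]
    simp only [inv_inv, mul_inv_cancel_left]
  set S : ρ.dual.asModule →ₗ[A] (Fin n → A) :=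
    { toFun := S0
      map_add' := S0add
      map_smul' := by
        intro a f
        show S0 (a • f) = a • S0 f
        induction a using MonoidAlgebra.induction_linear with
        | zero => simp only [zero_smul]; exact S00
        | add a b ha hb => rw [add_smul, S0add, ha, hb, add_smul]
        | single γ₀ r => exact S0key γ₀ r f } with hS
  -- the map J : A^n → dual P
  set J0 : (Fin n → A) → Module.Dual R P := fun a =>
    { toFun := fun p => ∑ j, ∑ γ : Γ, (a j).coeff γ * ((ii (ρ.asModuleEquiv.symm p)) j).coeff γ
      map_add' := by
        intro p q
        show (∑ j, ∑ γ : Γ, (a j).coeff γ * ((ii (ρ.asModuleEquiv.symm (p + q))) j).coeff γ) = _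
        rw [map_add, map_add]
        simp only [Pi.add_apply, hadd2, mul_add, Finset.sum_add_distrib]
      map_smul' := by
        intro r p
        show (∑ j, ∑ γ : Γ, (a j).coeff γ * ((ii (ρ.asModuleEquiv.symm (r • p))) j).coeff γ)
          = r • ∑ j, ∑ γ : Γ, (a j).coeff γ * ((ii (ρ.asModuleEquiv.symm p)) j).coeff γ
        rw [Representation.asModuleEquiv_symm_map_smul, map_smul ii, smul_eq_mul,
          Finset.mul_sum]
        refine Finset.sum_congr rfl fun j _ => ?_
        rw [Finset.mul_sum]
        refine Finset.sum_congr rfl fun γ _ => ?_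
        rw [Pi.smul_apply, halg, smul_eq_mul, MonoidAlgebra.coeff_single_one_mul]
        ring } with hJ0
  have hJ0apply : ∀ (a : Fin n → A) (p : P),
      J0 a p = ∑ j, ∑ γ : Γ, (a j).coeff γ * ((ii (ρ.asModuleEquiv.symm p)) j).coeff γ := by
    intro a p; rfl
  have J00 : J0 0 = 0 := by
    apply LinearMap.ext
    intro p
    rw [hJ0apply]
    simp
  have J0add : ∀ a b, J0 (a + b) = J0 a + J0 b := by
    intro a b
    apply LinearMap.ext
    intro p
    rw [LinearMap.add_apply, hJ0apply, hJ0apply, hJ0apply]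
    simp only [Pi.add_apply, hadd2, add_mul, Finset.sum_add_distrib]
  have J0key : ∀ (γ₀ : Γ) (r : R) (a : Fin n → A),
      J0 ((sg γ₀ r) • a) = r • ((J0 a) ∘ₗ (ρ γ₀⁻¹)) := by
    intro γ₀ r a
    apply LinearMap.ext
    intro p
    rw [hJ0apply, LinearMap.smul_apply, LinearMap.comp_apply, hJ0apply]
    have h1 : ρ.asModuleEquiv.symm ((ρ γ₀⁻¹) p)
        = (sg γ₀⁻¹ 1) • ρ.asModuleEquiv.symm p := by
      rw [Representation.asModuleEquiv_symm_map_rho]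
      rfl
    rw [h1, map_smul ii, smul_eq_mul, Finset.mul_sum]
    have haL : ∀ (j : Fin n) (γ : Γ), (((sg γ₀ r) • a) j).coeff γ = r * (a j).coeff (γ₀⁻¹ * γ) := by
      intro j γ
      rw [Pi.smul_apply, smul_eq_mul, MonoidAlgebra.coeff_single_mul_apply]
    have haR : ∀ (j : Fin n) (γ : Γ),
        (((sg γ₀⁻¹ 1) • (ii (ρ.asModuleEquiv.symm p))) j).coeff γ
          = (ii (ρ.asModuleEquiv.symm p) j).coeff (γ₀ * γ) := by
      intro j γ
      rw [Pi.smul_apply, smul_eq_mul, MonoidAlgebra.coeff_single_mul_apply, inv_inv, one_mul]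
    refine Finset.sum_congr rfl fun j _ => ?_
    rw [Finset.mul_sum]
    refine Fintype.sum_equiv (Equiv.mulLeft γ₀⁻¹) _ _ fun γ => ?_
    simp only [Equiv.coe_mulLeft]
    rw [haL, haR, mul_inv_cancel_left]
    ring
  set J : (Fin n → A) →ₗ[A] ρ.dual.asModule :=
    { toFun := fun a => ρ.dual.asModuleEquiv.symm (J0 a)
      map_add' := by
        intro a b
        show ρ.dual.asModuleEquiv.symm (J0 (a + b)) = _
        rw [J0add, map_add]
      map_smul' := by
        intro a y
        show ρ.dual.asModuleEquiv.symm (J0 (a • y)) = a • ρ.dual.asModuleEquiv.symm (J0 y)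
        induction a using MonoidAlgebra.induction_linear with
        | zero => simp only [zero_smul]; rw [J00, map_zero]
        | add a b ha hb => rw [add_smul, J0add, map_add, ha, hb, add_smul]
        | single γ₀ r =>
            apply ρ.dual.asModuleEquiv.injective
            rw [LinearEquiv.apply_symm_apply, hsmd, LinearEquiv.apply_symm_apply] <;>
              exact J0key γ₀ r y } with hJ
  -- retraction property : J ∘ S = id
  have hJS : ∀ f : ρ.dual.asModule, J (S f) = f := by
    intro f
    apply ρ.dual.asModuleEquiv.injective
    show ρ.dual.asModuleEquiv (ρ.dual.asModuleEquiv.symm (J0 (S0 f))) = _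
    rw [LinearEquiv.apply_symm_apply]
    set f' : Module.Dual R P := ρ.dual.asModuleEquiv f with hf'
    -- the R-linear functional x ↦ f' (π x)
    set L : (Fin n → A) →ₗ[R] R :=
      { toFun := fun x => f' (ρ.asModuleEquiv (π x))
        map_add' := by
          intro x y
          show f' (ρ.asModuleEquiv (π (x + y))) = _
          rw [map_add, map_add, map_add]
        map_smul' := by
          intro r x
          show f' (ρ.asModuleEquiv (π (r • x))) = r • f' (ρ.asModuleEquiv (π x))
          have h1 : r • x = (algebraMap R A r) • x := (algebraMap_smul A r x).symm
          rw [h1, map_smul π, halg, hsm, map_one, Module.End.one_apply, map_smul] } with hL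
    have hLapply : ∀ x : Fin n → A, L x = f' (ρ.asModuleEquiv (π x)) := fun _ => rfl
    have hLsmul : ∀ (c : R) (x : Fin n → A), c * L x = L ((algebraMap R A c) • x) := by
      intro c x
      rw [algebraMap_smul, map_smul, smul_eq_mul]
    apply LinearMap.ext
    intro p
    rw [hJ0apply]
    set b : Fin n → A := ii (ρ.asModuleEquiv.symm p) with hb
    have hS0val : ∀ (j : Fin n) (γ : Γ), ((S0 f) j).coeff γ = L (e j γ) := by
      intro j γ
      show (∑ δ : Γ, sg δ ((ρ.dual.asModuleEquiv f) (ρ.asModuleEquiv (π (e j δ))))).coeff γ = _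
      rw [MonoidAlgebra.coeff_sum, Finset.sum_apply']
      simp only [MonoidAlgebra.coeff_single, Finsupp.single_apply]
      rw [Finset.sum_ite_eq' Finset.univ γ]
      simp only [Finset.mem_univ, if_true]
      rfl
    calc (∑ j, ∑ γ : Γ, ((S0 f) j).coeff γ * ((b j).coeff γ))
        = ∑ j, ∑ γ : Γ, L ((algebraMap R A ((b j).coeff γ)) • (e j γ)) := by
          refine Finset.sum_congr rfl fun j _ => ?_
          refine Finset.sum_congr rfl fun γ _ => ?_
          rw [hS0val, mul_comm, hLsmul]
      _ = L (∑ j, ∑ γ : Γ, (algebraMap R A ((b j).coeff γ)) • (e j γ)) := by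
          rw [map_sum]
          refine Finset.sum_congr rfl fun j _ => ?_
          rw [map_sum]
      _ = L b := by
          congr 1
          funext k
          rw [Finset.sum_apply]
          have hjj : ∀ j, (∑ γ : Γ, (algebraMap R A ((b j).coeff γ)) • (e j γ)) k
              = if j = k then b j else 0 := by
            intro j
            rw [Finset.sum_apply]
            have hterm : ∀ γ : Γ, ((algebraMap R A ((b j).coeff γ)) • (e j γ)) k
                = if j = k then sg γ ((b j).coeff γ) else 0 := by
              intro γ
              simp only [he]
              rw [Pi.smul_apply, Pi.single_apply]
              rcases eq_or_ne j k with h | h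
              · subst h
                rw [if_pos rfl, if_pos rfl, halg, smul_eq_mul,
                  MonoidAlgebra.single_mul_single, mul_one, one_mul]
              · rw [if_neg (Ne.symm h), if_neg h, smul_zero]
            simp only [hterm]
            split_ifs with h
            · apply MonoidAlgebra.coeff_injective
              rw [MonoidAlgebra.coeff_sum]
              simp only [MonoidAlgebra.coeff_single]
              exact Finsupp.univ_sum_single (b j).coeff
            · simp
          simp only [hjj]
          rw [Finset.sum_ite_eq' Finset.univ k]
          simp
      _ = f' p := by
          rw [hLapply, hb, hii']
          rfl
  -- conclude by the retract lemma
  have hprod : Module.Injective (MonoidAlgebra R Γ) (Fin n → A) := aux_inj_pi (fun _ => hAA)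
  exact aux_inj_of_retract hprod S J hJS

end Main


/-- Let `O` be a DVR with uniformizer `ϖ`, `s ≥ 1`, `R = O/ϖ^s O`, `Γ` a finite
group.  A left `R[Γ]`-module is the same thing as an `R`-module `P` together with a
representation `ρ : Γ →* (P →ₗ[R] P)`; the corresponding `R[Γ]`-module is `ρ.asModule`.
If `P` is finitely generated and projective over `R[Γ]`, then its dual `Hom_R(P, R)`,
equipped with the contragredient action `(γ·f)(x) = f(γ⁻¹·x)` (this is `ρ.dual`, whose
associated `R[Γ]`-module is `ρ.dual.asModule`), is an injective `R[Γ]`-module. -/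
theorem stmt5 (O : Type) [CommRing O] [IsDomain O] [IsDiscreteValuationRing O]
    (ϖ : O) (hϖ : Irreducible ϖ) (s : ℕ) (hs : 1 ≤ s)
    (Γ : Type) [Group Γ] [Finite Γ]
    (P : Type) [AddCommGroup P] [Module (O ⧸ Ideal.span {ϖ ^ s}) P]
    (ρ : Representation (O ⧸ Ideal.span {ϖ ^ s}) Γ P)
    (hfin : Module.Finite (MonoidAlgebra (O ⧸ Ideal.span {ϖ ^ s}) Γ) ρ.asModule)
    (hproj : Module.Projective (MonoidAlgebra (O ⧸ Ideal.span {ϖ ^ s}) Γ) ρ.asModule) :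
    Module.Injective (MonoidAlgebra (O ⧸ Ideal.span {ϖ ^ s}) Γ) ρ.dual.asModule := by
  classical
  letI : Fintype Γ := Fintype.ofFinite Γ
  have hRR : Module.Injective (O ⧸ Ideal.span {ϖ ^ s}) (O ⧸ Ideal.span {ϖ ^ s}) :=
    aux_quot_selfinj O ϖ hϖ s hs
  have hAA := aux_monoidAlgebra_selfinj (R := O ⧸ Ideal.span {ϖ ^ s}) (Γ := Γ) hRR
  exact aux_dual_injective ρ hfin hproj hAA
end

section
/- Let O be a discrete valuation ring with uniformizer ϖ, let s ≥ 1 be an integer, let R = O/ϖ^s O, and let Γ be a finite group. Then the group algebra R[Γ] is self-injective: R[Γ] is an injective left module over itself. -/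
theorem baer_quot (O : Type*) [CommRing O] [IsDomain O] [IsDiscreteValuationRing O]
    (ϖ : O) (hϖ : Irreducible ϖ) (s : ℕ) (hs : 1 ≤ s) :
    Module.Baer (O ⧸ Ideal.span {ϖ ^ s}) (O ⧸ Ideal.span {ϖ ^ s}) := by
  classical
  set R := O ⧸ Ideal.span {ϖ ^ s} with hR
  have hϖ0 : ϖ ≠ 0 := hϖ.ne_zero
  have mk_eq_zero : ∀ z : O, (Ideal.Quotient.mk (Ideal.span {ϖ ^ s}) z = 0) ↔ ϖ ^ s ∣ z := by
    intro z
    rw [Ideal.Quotient.eq_zero_iff_mem, Ideal.mem_span_singleton]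
  intro I g
  -- I is the image of a principal ideal of O
  obtain ⟨x, hx⟩ : ∃ x : O, I = Ideal.span {Ideal.Quotient.mk (Ideal.span {ϖ ^ s}) x} := by
    have hsurj := Ideal.Quotient.mk_surjective (I := Ideal.span {ϖ ^ s})
    have hIm : I = Ideal.map (Ideal.Quotient.mk (Ideal.span {ϖ ^ s}))
        (Ideal.comap (Ideal.Quotient.mk (Ideal.span {ϖ ^ s})) I) :=
      (Ideal.map_comap_of_surjective _ hsurj I).symm
    obtain ⟨x, hxgen⟩ :=
      (IsPrincipalIdealRing.principal
        (Ideal.comap (Ideal.Quotient.mk (Ideal.span {ϖ ^ s})) I)).principal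
    refine ⟨x, ?_⟩
    rw [hIm, hxgen]
    rw [show (Submodule.span O {x} : Ideal O) = Ideal.span {x} from rfl, Ideal.map_span,
      Set.image_singleton]
  by_cases hdvd : ϖ ^ s ∣ x
  · -- the ideal is zero
    have : I = ⊥ := by
      rw [hx, (mk_eq_zero x).mpr hdvd, Ideal.span_singleton_eq_bot.mpr rfl]
    refine ⟨0, fun z hz => ?_⟩
    have hz0 : z = 0 := by rwa [this, Ideal.mem_bot] at hz
    subst hz0
    have h0 : (⟨(0 : O ⧸ Ideal.span {ϖ ^ s}), hz⟩ : I) = 0 := Subtype.ext rfl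
    rw [LinearMap.zero_apply, h0, map_zero]
  · have hx0 : x ≠ 0 := by rintro rfl; exact hdvd (dvd_zero _)
    obtain ⟨n, u, hxu⟩ := IsDiscreteValuationRing.eq_unit_mul_pow_irreducible hx0 hϖ
    have hns : n < s := by
      by_contra hns
      push_neg at hns
      exact hdvd (hxu ▸ Dvd.dvd.mul_left (pow_dvd_pow ϖ hns) _)
    -- I is generated by mk (ϖ ^ n)
    have hI : I = Ideal.span {Ideal.Quotient.mk (Ideal.span {ϖ ^ s}) (ϖ ^ n)} := by
      rw [hx, hxu, map_mul]
      exact Ideal.span_singleton_mul_left_unit (u.isUnit.map (Ideal.Quotient.mk _)) _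
    set a : R := Ideal.Quotient.mk (Ideal.span {ϖ ^ s}) (ϖ ^ n) with ha
    have hmem : a ∈ I := by rw [hI]; exact Ideal.subset_span rfl
    set y : R := g ⟨a, hmem⟩ with hy
    -- ϖ^(s-n) * y = 0
    have hann : Ideal.Quotient.mk (Ideal.span {ϖ ^ s}) (ϖ ^ (s - n)) * y = 0 := by
      have h1 : (Ideal.Quotient.mk (Ideal.span {ϖ ^ s}) (ϖ ^ (s - n))) • (⟨a, hmem⟩ : I)
          = (0 : I) := by
        apply Subtype.ext
        show Ideal.Quotient.mk (Ideal.span {ϖ ^ s}) (ϖ ^ (s - n)) * a = 0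
        rw [ha, ← map_mul, ← pow_add, Nat.sub_add_cancel hns.le, (mk_eq_zero _).mpr dvd_rfl]
      calc Ideal.Quotient.mk (Ideal.span {ϖ ^ s}) (ϖ ^ (s - n)) * y
          = g ((Ideal.Quotient.mk (Ideal.span {ϖ ^ s}) (ϖ ^ (s - n))) • (⟨a, hmem⟩ : I)) := by
            rw [g.map_smul]; rfl
        _ = 0 := by rw [h1, g.map_zero]
    -- hence y = mk (ϖ^n) * mk t for some t
    obtain ⟨yt, hyt⟩ := Ideal.Quotient.mk_surjective (I := Ideal.span {ϖ ^ s}) y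
    have hdvd2 : ϖ ^ s ∣ ϖ ^ (s - n) * yt := by
      rw [← mk_eq_zero, map_mul, hyt, hann]
    obtain ⟨c, hc⟩ := hdvd2
    have hcancel : yt = ϖ ^ n * c := by
      have : ϖ ^ (s - n) * yt = ϖ ^ (s - n) * (ϖ ^ n * c) := by
        rw [hc, ← mul_assoc, ← pow_add, Nat.sub_add_cancel hns.le]
      exact mul_left_cancel₀ (pow_ne_zero _ hϖ0) this
    have hyc : y = a * Ideal.Quotient.mk (Ideal.span {ϖ ^ s}) c := by
      rw [← hyt, hcancel, map_mul, ha]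
    -- the extension
    refine ⟨(LinearMap.mulRight R (Ideal.Quotient.mk (Ideal.span {ϖ ^ s}) c)).restrictScalars R,
      fun z hz => ?_⟩
    obtain ⟨r, hr⟩ := Ideal.mem_span_singleton'.mp (hI ▸ hz)
    have : (⟨z, hz⟩ : I) = r • (⟨a, hmem⟩ : I) := by
      apply Subtype.ext
      show z = r * a
      rw [hr]
    rw [this, g.map_smul, smul_eq_mul, ← hy, hyc]
    show z * Ideal.Quotient.mk (Ideal.span {ϖ ^ s}) c = r * (a * Ideal.Quotient.mk _ c)
    rw [← hr]
    ring


open MonoidAlgebra in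
theorem monoidAlgebra_selfInjective (R : Type*) [CommRing R] (hB : Module.Baer R R)
    (Γ : Type*) [Group Γ] [Finite Γ] :
    Module.Injective (MonoidAlgebra R Γ) (MonoidAlgebra R Γ) := by
  classical
  haveI := Fintype.ofFinite Γ
  set A := MonoidAlgebra R Γ with hA
  constructor
  intro X Y _ _ _ _ i hi f
  letI : Module R X := Module.compHom X (algebraMap R A)
  letI : Module R Y := Module.compHom Y (algebraMap R A)
  have hsX : ∀ (r : R) (x : X), r • x = (algebraMap R A r) • x := fun _ _ => rfl
  have hsY : ∀ (r : R) (y : Y), r • y = (algebraMap R A r) • y := fun _ _ => rfl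
  haveI : IsScalarTower R A Y :=
    ⟨fun r a y => by rw [Algebra.smul_def, mul_smul]; rfl⟩
  let iR : X →ₗ[R] Y :=
    { toFun := i, map_add' := i.map_add,
      map_smul' := fun r x => by simp only [hsX, hsY, i.map_smul, RingHom.id_apply] }
  let φ : X →ₗ[R] R :=
    { toFun := fun x => (f x).coeff 1
      map_add' := fun x y => by show (f (x+y)).coeff 1 = (f x).coeff 1 + (f y).coeff 1; rw [map_add]; rfl
      map_smul' := fun r x => by
        show (f (r • x)).coeff 1 = r • (f x).coeff 1
        rw [hsX, map_smul, algebraMap_smul]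
        rfl }
  obtain ⟨ψ, hψ⟩ := hB.extension_property iR hi φ
  have hψi : ∀ x : X, ψ (i x) = (f x).coeff 1 := fun x => LinearMap.congr_fun hψ x
  let F0 : Y → A := fun y => ∑ g : Γ, single g (ψ (single g⁻¹ (1:R) • y))
  have hF0add : ∀ y z : Y, F0 (y + z) = F0 y + F0 z := by
    intro y z
    simp only [F0, smul_add, map_add, single_add, Finset.sum_add_distrib]
  have hkey : ∀ (a : A) (y : Y), F0 (a • y) = a * F0 y := by
    intro a y
    have : (⟨⟨fun a => F0 (a • y), by simp [F0]⟩,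
        fun a b => by simp only [add_smul, hF0add]⟩ : A →+ A)
        = AddMonoidHom.mulRight (F0 y) := by
      apply MonoidAlgebra.addMonoidHom_ext
      intro h c
      show F0 ((single h c : A) • y) = single h c * F0 y
      have step : ∀ g : Γ, (single g⁻¹ (1:R) : A) • (single h c : A) • y
          = c • ((single (g⁻¹ * h) (1:R) : A) • y) := by
        intro g
        rw [← mul_smul, single_mul_single, one_mul, ← smul_assoc]
        congr 1
        rw [MonoidAlgebra.smul_single', mul_one]
      have lhs : F0 ((single h c : A) • y)
          = ∑ g : Γ, single g (c * ψ ((single (g⁻¹ * h) (1:R) : A) • y)) := by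
        refine Finset.sum_congr rfl fun g _ => ?_
        rw [step g, map_smul, smul_eq_mul]
      rw [lhs]
      have rhs : single h c * F0 y
          = ∑ g : Γ, single (h * g) (c * ψ ((single g⁻¹ (1:R) : A) • y)) := by
        rw [Finset.mul_sum]
        refine Finset.sum_congr rfl fun g _ => ?_
        rw [single_mul_single]
      rw [rhs]
      refine (Fintype.sum_equiv (Equiv.mulLeft h)
        (fun g => single (h * g) (c * ψ ((single g⁻¹ (1:R) : A) • y)))
        (fun g => single g (c * ψ ((single (g⁻¹ * h) (1:R) : A) • y))) ?_).symm
      intro g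
      simp only [Equiv.coe_mulLeft, mul_inv_rev]
      congr 3
      group
    exact DFunLike.congr_fun this a
  let F : Y →ₗ[A] A :=
    { toFun := F0
      map_add' := hF0add
      map_smul' := fun a y => by simp only [RingHom.id_apply]; exact hkey a y }
  refine ⟨F, ?_⟩
  intro x
  show F0 (i x) = f x
  have : ∀ g : Γ, ψ ((single g⁻¹ (1:R) : A) • i x) = (f x).coeff g := by
    intro g
    rw [← i.map_smul, hψi, f.map_smul, smul_eq_mul, coeff_single_mul_apply]
    simp
  simp only [F0, this]
  exact MonoidAlgebra.coeff_injective (by rw [coeff_sum]; simp only [coeff_single]; exact Finsupp.univ_sum_single _)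

/-- For `R = O/ϖ^s O` (with `O` a DVR, `ϖ` a uniformizer, `s ≥ 1`) and a finite
group `Γ`, the group algebra `R[Γ]` is self-injective: it is an injective left module over
itself. -/
theorem stmt6 (O : Type*) [CommRing O] [IsDomain O] [IsDiscreteValuationRing O]
    (ϖ : O) (hϖ : Irreducible ϖ) (s : ℕ) (hs : 1 ≤ s)
    (Γ : Type*) [Group Γ] [Finite Γ] :
    Module.Injective (MonoidAlgebra (O ⧸ Ideal.span {ϖ ^ s}) Γ)
      (MonoidAlgebra (O ⧸ Ideal.span {ϖ ^ s}) Γ) := by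
  exact monoidAlgebra_selfInjective _ (baer_quot O ϖ hϖ s hs) Γ
end

section
/- Let R be a commutative ring, let Γ be a group and let N be a normal subgroup of Γ. If I is an injective left R[Γ]-module, then the submodule of N-invariants I^N = {x ∈ I : n·x = x for all n ∈ N}, regarded as a left R[Γ/N]-module, is an injective R[Γ/N]-module. -/
/-- A single element of a monoid algebra, with the type ascribed as `MonoidAlgebra`. -/
noncomputable def sg (R : Type) [CommRing R] (G : Type) [Monoid G] (g : G) (c : R) :
    MonoidAlgebra R G := MonoidAlgebra.single g c

lemma sg_def (R : Type) [CommRing R] (G : Type) [Monoid G] (g : G) (c : R) :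
    sg R G g c = MonoidAlgebra.single g c := rfl

/-- Let `R` be a commutative ring, `Γ` a group, `N` a normal subgroup of `Γ`.
A left `R[Γ]`-module is the same thing as an `R`-module `I` together with a representation
`ρ : Γ →* (I →ₗ[R] I)`; the corresponding `R[Γ]`-module is `ρ.asModule`.  Let
`Representation.invariants (ρ.comp N.subtype)` be the submodule of `N`-invariants `I^N`, and let `σ` be
the representation of `Γ/N` on `I^N` induced by `ρ` (expressed by the compatibility
hypothesis `hσ`).  If `ρ.asModule` is an injective `R[Γ]`-module, then `σ.asModule`
(i.e. `I^N` as an `R[Γ/N]`-module) is an injective `R[Γ/N]`-module. -/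
theorem stmt8 (R : Type) [CommRing R] (Γ : Type) [Group Γ] (N : Subgroup Γ) [N.Normal]
    (I : Type) [AddCommGroup I] [Module R I] (ρ : Representation R Γ I)
    (σ : Representation R (Γ ⧸ N) (Representation.invariants (ρ.comp N.subtype)))
    (hσ : ∀ (γ : Γ) (x : Representation.invariants (ρ.comp N.subtype)),
      (↑(σ (QuotientGroup.mk γ) x) : I) = ρ γ (↑x : I))
    (hinj : Module.Injective (MonoidAlgebra R Γ) ρ.asModule) :
    Module.Injective (MonoidAlgebra R (Γ ⧸ N)) σ.asModule := by
  classical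
  constructor
  intro X Y _ _ _ _ f hf g
  let π : MonoidAlgebra R Γ →+* MonoidAlgebra R (Γ ⧸ N) :=
    MonoidAlgebra.mapDomainRingHom R (QuotientGroup.mk' N)
  have hπ : ∀ (γ : Γ) (c : R),
      π (sg R Γ γ c) = sg R (Γ ⧸ N) (QuotientGroup.mk γ) c := by
    intro γ c
    simp [π, sg, MonoidAlgebra.mapDomainRingHom, Finsupp.mapDomain_single]
  letI instX : Module (MonoidAlgebra R Γ) X := Module.compHom X π
  letI instY : Module (MonoidAlgebra R Γ) Y := Module.compHom Y π
  have smulX : ∀ (a : MonoidAlgebra R Γ) (x : X), a • x = π a • x := fun _ _ => rfl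
  have smulY : ∀ (a : MonoidAlgebra R Γ) (y : Y), a • y = π a • y := fun _ _ => rfl
  -- `f` as an `R[Γ]`-linear map
  let fA : X →ₗ[MonoidAlgebra R Γ] Y :=
    { toFun := f
      map_add' := f.map_add
      map_smul' := fun a x => f.map_smul (π a) x }
  -- inclusion of invariants into `I` as an additive map of `R[Γ]`-modules
  let ι : σ.asModule →+ ρ.asModule :=
    (ρ.asModuleEquiv.symm.toAddMonoidHom).comp
      (((Representation.invariants (ρ.comp N.subtype)).subtype.toAddMonoidHom).comp
        σ.asModuleEquiv.toAddMonoidHom)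
  have ι_apply : ∀ m : σ.asModule,
      ρ.asModuleEquiv (ι m)
        = ((σ.asModuleEquiv m : Representation.invariants (ρ.comp N.subtype)) : I) :=
    fun m => rfl
  have key1 : ∀ (γ : Γ) (c : R) (m : σ.asModule),
      ι (sg R (Γ ⧸ N) (QuotientGroup.mk γ) c • m) = sg R Γ γ c • ι m := by
    intro γ c m
    apply ρ.asModuleEquiv.injective
    rw [ι_apply, sg_def, sg_def, Representation.asModuleEquiv_map_smul,
      Representation.asModuleEquiv_map_smul,
      Representation.asAlgebraHom_single, Representation.asAlgebraHom_single]
    simp only [LinearMap.smul_apply, SetLike.val_smul]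
    rw [ι_apply, hσ]
  have key1' : ∀ (a : MonoidAlgebra R Γ) (m : σ.asModule), ι (π a • m) = a • ι m := by
    intro a m
    induction a using MonoidAlgebra.induction with
    | zero => simp
    | single_add γ c F _ _ ih =>
        rw [← sg_def, map_add, add_smul, map_add, add_smul, ih, hπ γ c, key1]
  -- `g` as a map of `R[Γ]`-modules into `ρ.asModule`
  let gA : X →ₗ[MonoidAlgebra R Γ] ρ.asModule :=
    { toFun := fun x => ι (g x)
      map_add' := fun x y => by
        show ι (g (x + y)) = ι (g x) + ι (g y)
        rw [map_add, map_add]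
      map_smul' := fun a x => by
        show ι (g (π a • x)) = a • ι (g x)
        rw [g.map_smul, key1'] }
  obtain ⟨h, hh⟩ := hinj.out fA (fun a b hab => hf hab) gA
  -- the extension `h` lands in the invariants
  have hinv : ∀ y : Y, ρ.asModuleEquiv (h y) ∈ Representation.invariants (ρ.comp N.subtype) := by
    intro y
    rw [Representation.mem_invariants]
    intro n
    have e1 : sg R Γ (n : Γ) 1 • y = y := by
      rw [smulY, hπ]
      have hn : (QuotientGroup.mk (n : Γ) : Γ ⧸ N) = 1 := (QuotientGroup.eq_one_iff _).2 n.2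
      rw [hn]
      rw [show sg R (Γ ⧸ N) 1 1 = 1 from rfl, one_smul]
    have e2 : h (sg R Γ (n : Γ) 1 • y) = sg R Γ (n : Γ) 1 • h y := h.map_smul _ y
    rw [e1] at e2
    have e3 : ρ.asModuleEquiv (h y)
        = ρ.asAlgebraHom (MonoidAlgebra.single (n : Γ) (1 : R)) (ρ.asModuleEquiv (h y)) := by
      conv_lhs => rw [e2]
      rw [sg_def, Representation.asModuleEquiv_map_smul]
    rw [Representation.asAlgebraHom_single, one_smul] at e3
    exact e3.symm
  -- build the extension as a map into invariants
  let Hfun : Y → σ.asModule := fun y => σ.asModuleEquiv.symm ⟨ρ.asModuleEquiv (h y), hinv y⟩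
  have Hadd : ∀ y z : Y, Hfun (y + z) = Hfun y + Hfun z := by
    intro y z
    apply σ.asModuleEquiv.injective
    simp only [Hfun, AddEquiv.apply_symm_apply, map_add]
    ext
    simp [map_add]
  have key2 : ∀ (q : Γ ⧸ N) (c : R) (y : Y),
      Hfun (sg R (Γ ⧸ N) q c • y) = sg R (Γ ⧸ N) q c • Hfun y := by
    intro q c y
    obtain ⟨γ, rfl⟩ := QuotientGroup.mk_surjective q
    apply σ.asModuleEquiv.injective
    simp only [Hfun, AddEquiv.apply_symm_apply, LinearEquiv.apply_symm_apply, sg_def, Representation.asModuleEquiv_map_smul]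
    apply Subtype.ext
    rw [Representation.asAlgebraHom_single]
    simp only [LinearMap.smul_apply, SetLike.val_smul]
    rw [hσ]
    have e : sg R (Γ ⧸ N) (QuotientGroup.mk γ) c • y = sg R Γ γ c • y := by
      rw [smulY, hπ]
    rw [← sg_def, e, h.map_smul, sg_def, Representation.asModuleEquiv_map_smul,
      Representation.asAlgebraHom_single]
    simp
  have key2' : ∀ (b : MonoidAlgebra R (Γ ⧸ N)) (y : Y), Hfun (b • y) = b • Hfun y := by
    intro b y
    induction b using MonoidAlgebra.induction with
    | zero =>
        apply σ.asModuleEquiv.injective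
        simp [Hfun]
    | single_add q c F _ _ ih =>
        rw [← sg_def, add_smul, add_smul, Hadd, ih, key2]
  refine ⟨{ toFun := Hfun, map_add' := Hadd, map_smul' := key2' }, fun x => ?_⟩
  show Hfun (f x) = g x
  apply σ.asModuleEquiv.injective
  simp only [Hfun, AddEquiv.apply_symm_apply]
  apply Subtype.ext
  show ρ.asModuleEquiv (h (fA x)) = _
  rw [hh x]
  rfl
end

section
/- Let R be a commutative ring, let G be a group, and let H be a normal subgroup of G of finite index n, with n invertible in R. If M is a left R[G]-module whose restriction to R[H] is a projective R[H]-module, then M is a projective R[G]-module. -/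
open MonoidAlgebra


/-- Let `R` be a commutative ring, `G` a group, and `H` a normal subgroup of
`G` of finite index `n`, with `n` invertible in `R`.  A left `R[G]`-module is the same
thing as an `R`-module `M` together with a representation `ρ : G →* (M →ₗ[R] M)`; the
corresponding `R[G]`-module is `ρ.asModule`, and its restriction to `R[H]` corresponds to
`ρ.comp H.subtype`.  If the restriction of `M` to `R[H]` is projective over `R[H]`, then
`M` is projective over `R[G]`. -/
theorem stmt10 (R : Type*) [CommRing R] (G : Type*) [Group G] (H : Subgroup G) [H.Normal]
    (n : ℕ) (hn : 0 < n) (hidx : H.index = n) (hu : IsUnit (n : R))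
    (M : Type*) [AddCommGroup M] [Module R M] (ρ : Representation R G M)
    (hres : Module.Projective (MonoidAlgebra R H)
      (Representation.asModule (ρ.comp H.subtype))) :
    Module.Projective (MonoidAlgebra R G) ρ.asModule := by
  classical
  obtain ⟨u, hu⟩ := hu
  have hfin : Finite (G ⧸ H) := by
    refine Nat.finite_of_card_ne_zero ?_
    rw [← Subgroup.index_eq_card, hidx]; omega
  cases nonempty_fintype (G ⧸ H)
  letI : IsScalarTower R (MonoidAlgebra R G) ρ.asModule :=
    ⟨fun r a m => by
      show ρ.asAlgebraHom (r • a) m = r • ρ.asAlgebraHom a m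
      rw [map_smul]; rfl⟩
  letI : Module (MonoidAlgebra R H) (ρ.asModule →₀ MonoidAlgebra R G) :=
    Module.compHom _ (MonoidAlgebra.mapDomainRingHom R H.subtype)
  set A := MonoidAlgebra R G with hA
  let π : (ρ.asModule →₀ A) →ₗ[A] ρ.asModule :=
    Finsupp.linearCombination A _root_.id
  have hπ : ∀ (a : A) (m : ρ.asModule), π (Finsupp.single m a) = a • m := by
    intro a m; simp [π]
  -- scalar conversion lemmas (definitional)
  have e1 : ∀ (b : MonoidAlgebra R H) (y : Representation.asModule (ρ.comp H.subtype)),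
      b • y = Representation.asAlgebraHom (ρ.comp H.subtype) b y := fun _ _ => rfl
  have e2 : ∀ (b : MonoidAlgebra R H) (z : ρ.asModule →₀ A),
      b • z = (MonoidAlgebra.mapDomainRingHom R H.subtype b) • z := fun _ _ => rfl
  have e3 : ∀ (a : A) (y : ρ.asModule), a • y = ρ.asAlgebraHom a y := fun _ _ => rfl
  have md : ∀ (h : H) (r : R),
      (MonoidAlgebra.mapDomainRingHom R H.subtype) (MonoidAlgebra.single h r)
        = (MonoidAlgebra.single ((h : G)) r : A) := by
    intro h r
    simp [MonoidAlgebra.mapDomainRingHom_apply]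
  have key : ∀ b : MonoidAlgebra R H,
      ρ.asAlgebraHom (MonoidAlgebra.mapDomainRingHom R H.subtype b)
        = Representation.asAlgebraHom (ρ.comp H.subtype) b := by
    intro b
    have : ρ.asAlgebraHom.comp (MonoidAlgebra.mapDomainAlgHom R R H.subtype)
        = Representation.asAlgebraHom (ρ.comp H.subtype) := by
      apply MonoidAlgebra.algHom_ext
      intro h
      simp
      exact Subsingleton.elim _ _
    exact AlgHom.congr_fun this b
  let πB : (ρ.asModule →₀ A) →ₗ[MonoidAlgebra R H]
      Representation.asModule (ρ.comp H.subtype) :=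
    { toFun := fun x => π x
      map_add' := fun x y => π.map_add x y
      map_smul' := fun b x => by
        show π ((MonoidAlgebra.mapDomainRingHom R H.subtype b) • x)
          = Representation.asAlgebraHom (ρ.comp H.subtype) b (π x)
        rw [π.map_smul, ← key b]
        rfl }
  have hπB : Function.Surjective πB := fun m =>
    ⟨Finsupp.single m 1, by show π _ = _; exact (hπ 1 m).trans (one_smul _ _)⟩
  obtain ⟨sB, hsB⟩ := Module.projective_lifting_property πB LinearMap.id hπB
  have hsB' : ∀ x : Representation.asModule (ρ.comp H.subtype), π (sB x) = x :=
    fun x => LinearMap.congr_fun hsB x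
  -- R-linearity of sB
  have hsR : ∀ (r : R) (x : ρ.asModule), sB (r • x) = r • sB x := by
    intro r x
    have h2 := sB.map_smul (MonoidAlgebra.single (1 : H) r) x
    erw [e1, e2, md] at h2
    have l1 : Representation.asAlgebraHom (ρ.comp H.subtype) (MonoidAlgebra.single 1 r) x
        = r • x := by simp; rfl
    have l2 : (MonoidAlgebra.single (((1:H) : G)) r : A) • sB x = r • sB x := by
      rw [show (MonoidAlgebra.single (((1:H) : G)) r : A) = algebraMap R A r by
        rw [MonoidAlgebra.coe_algebraMap]; simp]
      exact algebraMap_smul A r (sB x)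
    rw [l1, l2] at h2
    exact h2
  -- H-equivariance of sB (with A-side smul)
  have hsH : ∀ (h : H) (x : ρ.asModule),
      sB ((MonoidAlgebra.single ((h : G)) (1:R) : A) • x)
        = (MonoidAlgebra.single ((h : G)) (1:R) : A) • sB x := by
    intro h x
    have h2 := sB.map_smul (MonoidAlgebra.single h (1:R)) x
    erw [e1, e2, md] at h2
    have l1 : Representation.asAlgebraHom (ρ.comp H.subtype) (MonoidAlgebra.single h 1) x
        = (MonoidAlgebra.single ((h : G)) (1:R) : A) • x := by
      rw [e3]
      simp
    rw [l1] at h2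
    simpa using h2
  -- the averaging family
  set t : G → ρ.asModule → (ρ.asModule →₀ A) := fun g m =>
    (MonoidAlgebra.single g (1:R) : A) •
      sB ((MonoidAlgebra.single g⁻¹ (1:R) : A) • m) with ht_def
  have ht_coset : ∀ (g : G) (h : H) (m : ρ.asModule), t (g * (h:G)) m = t g m := by
    intro g h m
    simp only [ht_def]
    rw [mul_inv_rev, show ((h:G))⁻¹ = ((h⁻¹ : H) : G) by simp,
      show (MonoidAlgebra.single (((h⁻¹:H):G) * g⁻¹) (1:R) : A)
          = MonoidAlgebra.single ((h⁻¹:H):G) 1 * MonoidAlgebra.single g⁻¹ 1 by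
        rw [MonoidAlgebra.single_mul_single, mul_one],
      mul_smul, hsH h⁻¹]
    rw [smul_smul, MonoidAlgebra.single_mul_single, mul_one]
    congr 2
    simp [mul_assoc]
  have ht_out : ∀ (g : G) (m : ρ.asModule), t (((g : G ⧸ H)).out) m = t g m := by
    intro g m
    obtain ⟨h, hh⟩ := QuotientGroup.mk_out_eq_mul H g
    rw [hh]
    exact ht_coset g h m
  have ht_smul : ∀ (g x : G) (m : ρ.asModule),
      t x ((MonoidAlgebra.single g (1:R) : A) • m)
        = (MonoidAlgebra.single g (1:R) : A) • t (g⁻¹ * x) m := by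
    intro g x m
    simp only [ht_def, smul_smul, MonoidAlgebra.single_mul_single, one_mul, mul_one,
      mul_inv_rev, inv_inv, mul_inv_cancel_left]
  have ht_R : ∀ (x : G) (r : R) (m : ρ.asModule), t x (r • m) = r • t x m := by
    intro x r m
    simp only [ht_def]
    rw [smul_comm ((MonoidAlgebra.single x⁻¹ (1:R)) : A) r m, hsR,
      smul_comm ((MonoidAlgebra.single x (1:R)) : A) r]
  -- the averaged R-linear map
  let f0 : ρ.asModule →ₗ[R] (ρ.asModule →₀ A) :=
    { toFun := fun m => (↑u⁻¹ : R) • ∑ q : G ⧸ H, t q.out m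
      map_add' := fun m m' => by
        simp only [ht_def, smul_add, map_add]
        simp only [show ∀ a b : ρ.asModule, sB (a + b) = sB a + sB b from
          fun a b => sB.map_add a b, smul_add]
        rw [Finset.sum_add_distrib, smul_add]
      map_smul' := fun r m => by
        simp only [RingHom.id_apply]
        rw [show (∑ q : G ⧸ H, t q.out (r • m)) = ∑ q : G ⧸ H, r • t q.out m from
          Finset.sum_congr rfl fun q _ => ht_R q.out r m, ← Finset.smul_sum, smul_comm] }
  have hcomm : ∀ (g : G) (v : ρ.asModule),
      f0 (MonoidAlgebra.single g (1:R) • v) = MonoidAlgebra.single g (1:R) • f0 v := by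
    intro g v
    show (↑u⁻¹ : R) • ∑ q : G ⧸ H, t q.out (MonoidAlgebra.single g (1:R) • v)
      = MonoidAlgebra.single g (1:R) • ((↑u⁻¹ : R) • ∑ q : G ⧸ H, t q.out v)
    have step1 : ∀ q : G ⧸ H, t q.out (MonoidAlgebra.single g (1:R) • v)
        = MonoidAlgebra.single g (1:R) • t ((((g⁻¹ * q.out : G)) : G ⧸ H)).out v := by
      intro q
      rw [ht_smul g q.out v, ht_out]
    rw [Finset.sum_congr rfl fun q _ => step1 q, ← Finset.smul_sum]
    have hbij : Function.Bijective (fun q : G ⧸ H => (((g⁻¹ * q.out : G)) : G ⧸ H)) := by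
      rw [Fintype.bijective_iff_surjective_and_card]
      refine ⟨fun q => ⟨((g * q.out : G) : G ⧸ H), ?_⟩, rfl⟩
      obtain ⟨h, hh⟩ := QuotientGroup.mk_out_eq_mul H (g * q.out)
      show ((g⁻¹ * (((g * q.out : G)) : G ⧸ H).out : G) : G ⧸ H) = q
      rw [hh, show g⁻¹ * (g * q.out * (h:G)) = q.out * (h:G) by group,
        QuotientGroup.mk_mul_of_mem _ h.2, QuotientGroup.out_eq']
    have hsum : ∑ q : G ⧸ H, t ((((g⁻¹ * q.out : G)) : G ⧸ H)).out v
        = ∑ q : G ⧸ H, t q.out v :=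
      Fintype.sum_bijective _ hbij _ _ (fun q => rfl)
    rw [hsum, smul_comm]
  let fA : ρ.asModule →ₗ[A] (ρ.asModule →₀ A) :=
    MonoidAlgebra.equivariantOfLinearOfComm f0 hcomm
  refine Module.Projective.of_split fA π ?_
  ext m
  show π (f0 m) = m
  have : π (f0 m) = (↑u⁻¹ : R) • ∑ q : G ⧸ H, π (t q.out m) := by
    show π ((↑u⁻¹ : R) • ∑ q : G ⧸ H, t q.out m) = _
    rw [π.map_smul_of_tower, map_sum]
  rw [this]
  have hterm : ∀ x : G, π (t x m) = m := by
    intro x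
    show π ((MonoidAlgebra.single x (1:R) : A) •
      sB ((MonoidAlgebra.single x⁻¹ (1:R) : A) • m)) = m
    rw [π.map_smul, hsB' ((MonoidAlgebra.single x⁻¹ (1:R) : A) • m), smul_smul, MonoidAlgebra.single_mul_single, mul_one,
      mul_inv_cancel]
    rw [← MonoidAlgebra.one_def, one_smul]
  rw [Finset.sum_congr rfl fun q _ => hterm q.out, Finset.sum_const, Finset.card_univ]
  have hcard : ((Fintype.card (G ⧸ H) : R)) = (u : R) := by
    rw [hu]
    rw [← hidx, Subgroup.index_eq_card, Nat.card_eq_fintype_card]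
  rw [← Nat.cast_smul_eq_nsmul R, hcard, smul_smul, Units.inv_mul, one_smul]
end

section
/- Let O be a discrete valuation ring with uniformizer ϖ whose residue field has characteristic p > 0, let s ≥ 1 be an integer, let R = O/ϖ^s O, and let Γ be a finite p-group. Then the group algebra R[Γ] is a local ring, in the sense that the non-units of R[Γ] form a two-sided ideal (equivalently, R[Γ] has a unique maximal left ideal). -/
open MulAction in
lemma aux_exists_fixed (p : ℕ) [Fact p.Prime] (Γ : Type*) [Group Γ] [Finite Γ]
    (hΓ : IsPGroup p Γ) (M : Type*) [AddCommGroup M] [Module (ZMod p) M]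
    (ρ : Γ →* AddMonoid.End M) (v : M) (hv : v ≠ 0) :
    ∃ w : M, w ≠ 0 ∧ ∀ g : Γ, ρ g w = w := by
  haveI : NeZero p := ⟨(Fact.out : p.Prime).ne_zero⟩
  set U : Submodule (ZMod p) M := Submodule.span (ZMod p) (Set.range fun g : Γ => ρ g v) with hU
  have hstable : ∀ (g : Γ) (u : M), u ∈ U → ρ g u ∈ U := by
    intro g u hu
    induction hu using Submodule.span_induction with
    | mem x hx =>
      obtain ⟨h, rfl⟩ := hx
      have : ρ g (ρ h v) = ρ (g * h) v := by rw [map_mul]; rfl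
      rw [this]
      exact Submodule.subset_span ⟨g * h, rfl⟩
    | zero => rw [map_zero]; exact U.zero_mem
    | add x y _ _ hx hy => rw [map_add]; exact U.add_mem hx hy
    | smul c x _ hx => rw [ZMod.map_smul (ρ g)]; exact U.smul_mem c hx
  have hvU : v ∈ U := by
    have : ρ 1 v = v := by rw [map_one]; rfl
    exact this ▸ Submodule.subset_span ⟨1, rfl⟩
  haveI : Finite Γ := inferInstance
  haveI : Module.Finite (ZMod p) U :=
    Module.Finite.span_of_finite _ (Set.finite_range _)
  haveI : Finite U := Module.finite_of_finite (ZMod p)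
  letI : SMul Γ U := ⟨fun g u => ⟨ρ g u.1, hstable g u.1 u.2⟩⟩
  letI : MulAction Γ U :=
    { one_smul := fun u => Subtype.ext (by show ρ 1 u.1 = u.1; rw [map_one]; rfl)
      mul_smul := fun g h u => Subtype.ext (by show ρ (g*h) u.1 = ρ g (ρ h u.1); rw [map_mul]; rfl) }
  -- p divides card U
  have hu0 : (⟨v, hvU⟩ : U) ≠ 0 := by
    intro h; exact hv (congrArg Subtype.val h)
  have hord : addOrderOf (⟨v, hvU⟩ : U) = p := by
    have hdvd : addOrderOf (⟨v, hvU⟩ : U) ∣ p := by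
      apply addOrderOf_dvd_of_nsmul_eq_zero
      have : ((p : ZMod p)) • (⟨v, hvU⟩ : U) = p • (⟨v, hvU⟩ : U) := Nat.cast_smul_eq_nsmul _ _ _
      rw [← this, ZMod.natCast_self, zero_smul]
    rcases (Fact.out : p.Prime).eq_one_or_self_of_dvd _ hdvd with h | h
    · exact absurd (AddMonoid.addOrderOf_eq_one_iff.mp h) hu0
    · exact h
  have hcardU : p ∣ Nat.card U := by
    have h := addOrderOf_dvd_natCard (⟨v, hvU⟩ : U)
    rwa [hord] at h
  have hmod := hΓ.card_modEq_card_fixedPoints U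
  have hcardF : p ∣ Nat.card (fixedPoints Γ U) := by
    have := (Nat.modEq_zero_iff_dvd.mpr hcardU).symm.trans hmod
    exact Nat.modEq_zero_iff_dvd.mp this.symm
  have h0F : (0 : U) ∈ fixedPoints Γ U := by
    intro g; exact Subtype.ext (by show ρ g (0:U).1 = (0:U).1; simp)
  haveI : Nonempty (fixedPoints Γ U) := ⟨⟨0, h0F⟩⟩
  have hpos : 0 < Nat.card (fixedPoints Γ U) := Nat.card_pos
  have h1lt : 1 < Nat.card (fixedPoints Γ U) :=
    lt_of_lt_of_le (Fact.out : p.Prime).one_lt (Nat.le_of_dvd hpos hcardF)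
  haveI := Fintype.ofFinite (fixedPoints Γ U)
  rw [Nat.card_eq_fintype_card] at h1lt
  haveI : Nontrivial (fixedPoints Γ U) := Fintype.one_lt_card_iff_nontrivial.mp h1lt
  obtain ⟨x, hx⟩ := exists_ne (⟨0, h0F⟩ : fixedPoints Γ U)
  refine ⟨x.1.1, ?_, ?_⟩
  · intro h
    apply hx
    apply Subtype.ext
    exact Subtype.ext h
  · intro g
    have := x.2 g
    exact congrArg Subtype.val this

set_option maxHeartbeats 1600000 in
/-- Let `O` be a DVR with uniformizer `ϖ` whose residue field has
characteristic `p > 0`, let `s ≥ 1`, `R = O/ϖ^s O`, and let `Γ` be a finite `p`-group.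
Then the group algebra `R[Γ]` is a local ring (in the sense of possibly noncommutative
rings: the sum of two non-units is a non-unit, equivalently the non-units form a
two-sided ideal / there is a unique maximal left ideal). -/
theorem stmt13 (O : Type*) [CommRing O] [IsDomain O] [IsDiscreteValuationRing O]
    (ϖ : O) (hϖ : Irreducible ϖ) (s : ℕ) (hs : 1 ≤ s)
    (p : ℕ) [Fact p.Prime] (hchar : CharP (IsLocalRing.ResidueField O) p)
    (Γ : Type*) [Group Γ] [Finite Γ] (hΓ : IsPGroup p Γ) :
    IsLocalRing (MonoidAlgebra (O ⧸ Ideal.span {ϖ ^ s}) Γ) := by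
  classical
  haveI := hchar
  set R := O ⧸ Ideal.span {ϖ ^ s} with hR
  set A := MonoidAlgebra R Γ with hA
  set k := IsLocalRing.ResidueField O with hk
  -- basic ideal facts
  have hϖm : ϖ ∈ IsLocalRing.maximalIdeal O := by
    rw [hϖ.maximalIdeal_eq]
    exact Ideal.mem_span_singleton_self ϖ
  have hle : Ideal.span {ϖ ^ s} ≤ IsLocalRing.maximalIdeal O := by
    rw [Ideal.span_le, Set.singleton_subset_iff]
    exact Ideal.pow_mem_of_mem _ hϖm s hs
  -- the maps
  let π : R →+* k := Ideal.Quotient.lift (Ideal.span {ϖ ^ s}) (IsLocalRing.residue O)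
    (fun a ha => Ideal.Quotient.eq_zero_iff_mem.mpr (hle ha))
  have hπmk : ∀ a : O, π (Ideal.Quotient.mk _ a) = IsLocalRing.residue O a := fun a =>
    Ideal.Quotient.lift_mk _ _ _
  let ε : A →ₐ[R] R := MonoidAlgebra.lift R R Γ 1
  have hεs : ∀ (a : Γ) (b : R), ε (MonoidAlgebra.single a b) = b := by
    intro a b
    rw [show ε (MonoidAlgebra.single a b) = b • (1 : Γ →* R) a from MonoidAlgebra.lift_single _ _ _]
    simp
  let φ : A →+* k := π.comp ε.toRingHom
  -- nontriviality
  haveI : Nontrivial R := Ideal.Quotient.nontrivial_iff.mpr (fun h => (IsLocalRing.maximalIdeal O).ne_top_iff_one.mp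
    (IsLocalRing.maximalIdeal.isMaximal O).ne_top (hle (h ▸ Submodule.mem_top)))
  haveI : Nontrivial A := MonoidAlgebra.instNontrivial
  -- elements of ker π are multiples of ϖ
  have hkerπ : ∀ r : R, π r = 0 → ∃ c : R, r = Ideal.Quotient.mk _ ϖ * c := by
    intro r hr
    obtain ⟨a, rfl⟩ := Ideal.Quotient.mk_surjective r
    rw [hπmk] at hr
    have hr' : a ∈ IsLocalRing.maximalIdeal O := Ideal.Quotient.eq_zero_iff_mem.mp hr
    rw [hϖ.maximalIdeal_eq, Ideal.mem_span_singleton] at hr'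
    obtain ⟨c, rfl⟩ := hr'
    exact ⟨Ideal.Quotient.mk _ c, by rw [map_mul]⟩
  -- Key step: left-invertibility of 1 + j for j in the kernel of φ
  have LI : ∀ j : A, φ j = 0 → ∃ z : A, z * (1 + j) = 1 := by
    intro j hj
    by_contra hcon
    push_neg at hcon
    have hsp : Ideal.span {(1 : A) + j} ≠ ⊤ := by
      intro ht
      have h1 : (1 : A) ∈ Ideal.span {(1 : A) + j} := ht ▸ Submodule.mem_top
      obtain ⟨z, hz⟩ := Submodule.mem_span_singleton.mp h1
      exact hcon z (by rwa [smul_eq_mul] at hz)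
    obtain ⟨m, hm, hjm⟩ := Ideal.exists_le_maximal _ hsp
    haveI := hm
    -- the simple module
    set M := A ⧸ m with hM
    haveI : IsSimpleModule A M := isSimpleModule_iff_isCoatom.mpr (Ideal.isMaximal_def.mp hm)
    have hv₀ : (Submodule.Quotient.mk (1 : A) : M) ≠ 0 := by
      rw [Ne, Submodule.Quotient.mk_eq_zero]
      intro h1
      exact hm.ne_top ((Ideal.eq_top_iff_one m).mpr h1)
    set v₀ : M := Submodule.Quotient.mk (1 : A) with hv₀def
    -- ϖ kills M
    set ϖR : R := Ideal.Quotient.mk _ ϖ with hϖR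
    set aϖ : A := algebraMap R A ϖR with haϖ
    have hϖM : ∀ v : M, aϖ • v = 0 := by
      let W : Submodule A M :=
        { carrier := {v | aϖ • v = 0}
          add_mem' := fun {x y} hx hy => by
            simp only [Set.mem_setOf_eq] at *
            rw [smul_add, hx, hy, add_zero]
          zero_mem' := smul_zero _
          smul_mem' := fun c x hx => by
            simp only [Set.mem_setOf_eq] at *
            rw [← mul_smul, show aϖ * c = c * aϖ from Algebra.commutes ϖR c, mul_smul, hx,
              smul_zero] }
      have hex : ∃ n, aϖ ^ n • v₀ = 0 := by
        refine ⟨s, ?_⟩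
        have hz : aϖ ^ s = 0 := by
          rw [haϖ, ← map_pow, hϖR, ← map_pow,
            Ideal.Quotient.eq_zero_iff_mem.mpr (Ideal.mem_span_singleton_self _), map_zero]
        rw [hz, zero_smul]
      have hspec : aϖ ^ (Nat.find hex) • v₀ = 0 := Nat.find_spec hex
      have hnne : Nat.find hex ≠ 0 := by
        intro h0
        rw [h0, pow_zero, one_smul] at hspec
        exact hv₀ hspec
      have hmin : aϖ ^ (Nat.find hex - 1) • v₀ ≠ 0 := Nat.find_min hex (by omega)
      have hw₁W : (aϖ ^ (Nat.find hex - 1) • v₀) ∈ W := by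
        show aϖ • (aϖ ^ (Nat.find hex - 1) • v₀) = 0
        rw [← mul_smul, ← pow_succ']
        have hn1 : Nat.find hex - 1 + 1 = Nat.find hex := by omega
        rw [hn1]
        exact hspec
      have hWne : W ≠ ⊥ := by
        intro h
        rw [h, Submodule.mem_bot] at hw₁W
        exact hmin hw₁W
      have hWtop : W = ⊤ := (eq_bot_or_eq_top W).resolve_left hWne
      intro v
      exact (hWtop ▸ Submodule.mem_top : v ∈ W)
    -- ker π kills M
    have hkerM : ∀ r : R, π r = 0 → ∀ v : M, algebraMap R A r • v = 0 := by
      intro r hr v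
      obtain ⟨c, rfl⟩ := hkerπ r hr
      rw [map_mul, ← haϖ,
  show aϖ * algebraMap R A c = algebraMap R A c * aϖ from Algebra.commutes ϖR _,
  mul_smul, hϖM, smul_zero]
    -- M is p-torsion
    have hpM : ∀ v : M, p • v = 0 := by
      intro v
      have h1 : (p : ℕ) • v = ((p : A)) • v := (Nat.cast_smul_eq_nsmul A p v).symm
      have h2 : (p : A) = algebraMap R A (p : R) := by rw [map_natCast]
      have h3 : π (p : R) = 0 := by rw [map_natCast]; exact CharP.cast_eq_zero k p
      rw [h1, h2, hkerM _ h3]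
    haveI : NeZero p := ⟨(Fact.out : p.Prime).ne_zero⟩
    letI : Module (ZMod p) M := AddCommGroup.zmodModule hpM
    -- the Γ-action as ZMod p-linear endomorphisms
    let ρ : Γ →* AddMonoid.End M :=
      { toFun := fun g => DistribMulAction.toAddMonoidHom M (MonoidAlgebra.single g (1 : R) : A)
        map_one' := AddMonoidHom.ext fun v => by
          show (MonoidAlgebra.single (1 : Γ) (1 : R) : A) • v = v
          rw [← MonoidAlgebra.one_def, one_smul]
        map_mul' := fun g h => AddMonoidHom.ext fun v => by
          show (MonoidAlgebra.single (g * h) (1 : R) : A) • v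
            = (MonoidAlgebra.single g (1 : R) : A) • ((MonoidAlgebra.single h (1 : R) : A) • v)
          rw [← mul_smul, MonoidAlgebra.single_mul_single, one_mul] }
    obtain ⟨w, hw0, hwfix⟩ := aux_exists_fixed p Γ hΓ M ρ v₀ hv₀
    have hfix : ∀ g : Γ, (MonoidAlgebra.single g (1 : R) : A) • w = w := fun g => hwfix g
    -- smul by x on the fixed vector is smul by ε x
    have halg : ∀ b : R, algebraMap R A b = MonoidAlgebra.single 1 b := by
      intro b
      rw [MonoidAlgebra.coe_algebraMap]
      simp
    have hsingle : ∀ (a : Γ) (b : R),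
        (MonoidAlgebra.single a b : A) = algebraMap R A b * MonoidAlgebra.single a (1 : R) := by
      intro a b
      rw [halg, MonoidAlgebra.single_mul_single, one_mul, mul_one]
    have hsmul : ∀ x : A, x • w = algebraMap R A (ε x) • w := by
      intro x
      induction x using MonoidAlgebra.induction_on with
      | of g =>
        rw [MonoidAlgebra.of_apply, show ε (MonoidAlgebra.single g (1 : R)) = 1 from hεs g 1,
          map_one, one_smul, hfix g]
      | add f g hf hg => rw [add_smul, map_add, map_add, add_smul, hf, hg]
      | smul r f hf =>
        conv_lhs => rw [Algebra.smul_def]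
        rw [mul_smul, hf, ← mul_smul, ← map_mul]
        congr 1
        rw [map_smul, smul_eq_mul]
    have hann : ∀ x : A, φ x = 0 → x • w = 0 := by
      intro x hx
      rw [hsmul x]
      exact hkerM _ hx w
    -- w generates M
    have hspan : Submodule.span A {w} = ⊤ := by
      rcases eq_bot_or_eq_top (Submodule.span A {w}) with h | h
      · exact absurd (Submodule.span_singleton_eq_bot.mp h) hw0
      · exact h
    -- j lies in m
    have hjm' : j ∈ m := by
      have hv₀w : v₀ ∈ Submodule.span A {w} := hspan ▸ Submodule.mem_top
      obtain ⟨a, ha⟩ := Submodule.mem_span_singleton.mp hv₀w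
      have : j • v₀ = 0 := by
        rw [← ha, ← mul_smul]
        exact hann _ (by rw [map_mul, hj, zero_mul])
      have hmk : j • v₀ = (Submodule.Quotient.mk (j * 1) : M) := (Submodule.Quotient.mk_smul m j 1).symm
      rw [hmk, mul_one, Submodule.Quotient.mk_eq_zero] at this
      exact this
    -- contradiction
    have h1j : (1 : A) + j ∈ m := hjm (Submodule.mem_span_singleton_self _)
    have : (1 : A) ∈ m := by
      have := m.sub_mem h1j hjm'
      simpa using this
    exact hm.ne_top ((Ideal.eq_top_iff_one m).mpr this)
  -- bootstrap: 1 + j is a unit for j in ker φ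
  have unit1j : ∀ j : A, φ j = 0 → IsUnit (1 + j) := by
    intro j hj
    obtain ⟨z, hz⟩ := LI j hj
    have hz2 : z + z * j = 1 := by
      have h := hz
      rw [mul_add, mul_one] at h
      exact h
    have hz' : z = 1 + -(z * j) := by
      rw [← hz2]
      exact (add_neg_cancel_right z (z * j)).symm
    have hφzj : φ (-(z * j)) = 0 := by rw [map_neg, map_mul, hj, mul_zero, neg_zero]
    obtain ⟨u, hu⟩ := LI _ hφzj
    rw [← hz'] at hu
    -- u * z = 1 and z * (1+j) = 1 ⟹ u = 1 + j
    have huz : u = 1 + j := by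
      calc u = u * (z * (1 + j)) := by rw [hz, mul_one]
        _ = (u * z) * (1 + j) := by rw [mul_assoc]
        _ = 1 + j := by rw [hu, one_mul]
    refine ⟨⟨1 + j, z, ?_, hz⟩, rfl⟩
    rw [← huz]
    exact hu
  -- every element with nonzero image under φ is a unit
  have hunit : ∀ x : A, φ x ≠ 0 → IsUnit x := by
    intro x hx
    obtain ⟨a, ha⟩ := IsLocalRing.residue_surjective (R := O) ((φ x)⁻¹)
    set y : A := algebraMap R A (Ideal.Quotient.mk (Ideal.span {ϖ ^ s}) a) with hy
    have hφy : φ y = (φ x)⁻¹ := by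
      show π (ε (algebraMap R A (Ideal.Quotient.mk (Ideal.span {ϖ ^ s}) a))) = (φ x)⁻¹
      rw [AlgHom.commutes, Algebra.algebraMap_self_apply, hπmk]
      exact ha
    have hyx : φ (y * x) = 1 := by rw [map_mul, hφy, inv_mul_cancel₀ hx]
    have hxy : φ (x * y) = 1 := by rw [map_mul, hφy, mul_inv_cancel₀ hx]
    have hu₁ : IsUnit (y * x) := by
      have h1 : φ (y * x - 1) = 0 := by rw [map_sub, hyx, map_one, sub_self]
      have := unit1j _ h1
      rwa [add_sub_cancel] at this
    have hu₂ : IsUnit (x * y) := by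
      have h1 : φ (x * y - 1) = 0 := by rw [map_sub, hxy, map_one, sub_self]
      have := unit1j _ h1
      rwa [add_sub_cancel] at this
    obtain ⟨u, hu⟩ := hu₁
    obtain ⟨v, hv⟩ := hu₂
    have hr : x * (y * ↑v⁻¹) = 1 := by rw [← mul_assoc, ← hv, Units.mul_inv]
    have hl : (↑u⁻¹ * y) * x = 1 := by rw [mul_assoc, ← hu, Units.inv_mul]
    have heq : (y * ↑v⁻¹ : A) = ↑u⁻¹ * y := by
      calc (y * ↑v⁻¹ : A) = 1 * (y * ↑v⁻¹) := (one_mul _).symm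
        _ = ((↑u⁻¹ * y) * x) * (y * ↑v⁻¹) := by rw [hl]
        _ = (↑u⁻¹ * y) * (x * (y * ↑v⁻¹)) := by rw [mul_assoc]
        _ = ↑u⁻¹ * y := by rw [hr, mul_one]
    exact (Units.mk x (y * ↑v⁻¹) (by rw [← mul_assoc, ← hv, Units.mul_inv])
      (by rw [heq, mul_assoc, ← hu, Units.inv_mul])).isUnit
  constructor
  intro a b hab
  by_cases h : φ a = 0
  · right
    apply hunit
    have hsum : φ a + φ b = 1 := by rw [← map_add, hab, map_one]
    rw [h, zero_add] at hsum
    rw [hsum]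
    exact one_ne_zero
  · left
    exact hunit a h
end
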